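/- arXiv:math/0501197 — 5 statements merged into one kernel-verified Lean document; each statement's English description precedes it below -/
import Mathlib

section
/- Let H ∈ (0, 1/2), let ε ∈ (0, 2H), and let 0 ≤ s' < t' ≤ s < t be real numbers. Then |ρ_H(s',t';s,t)| ≤ (H(1−2H)/(2H−ε)) · (t'−s')^{2H−ε} · ∫_s^t (u−t')^{ε−1} du, where the integral ∫_s^t (u−t')^{ε−1} du is finite (equal to ((t−t')^ε − (s−t')^ε)/ε, and equal to (t−s)^ε/ε when s = t'). -/
open Set MeasureTheory intervalIntegral

/-- Covariance of fractional Brownian increments with Hurst parameter `H`: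
`ρ_H(a,b;c,d) = (1/2)(|d−a|^{2H} + |c−b|^{2H} − |c−a|^{2H} − |d−b|^{2H})`,
i.e. `E((W_b − W_a)(W_d − W_c))`. -/
noncomputable def fbmCov (H a b c d : ℝ) : ℝ :=
  (|d - a| ^ (2 * H) + |c - b| ^ (2 * H) - |c - a| ^ (2 * H) - |d - b| ^ (2 * H)) / 2

/-- Subadditivity of `x ↦ x^p` for `p ∈ [0,1]`. -/
lemma add_rpow_le_rpow_add_rpow {x y p : ℝ} (hx : 0 ≤ x) (hy : 0 ≤ y) (hp : 0 ≤ p)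
    (hp1 : p ≤ 1) : (x + y) ^ p ≤ x ^ p + y ^ p := by
  have h := NNReal.rpow_add_le_add_rpow x.toNNReal y.toNNReal hp hp1
  rw [← Real.toNNReal_add hx hy] at h
  have h2 := NNReal.coe_le_coe.2 h
  rw [NNReal.coe_rpow, NNReal.coe_add, NNReal.coe_rpow, NNReal.coe_rpow,
    Real.coe_toNNReal _ (by positivity), Real.coe_toNNReal _ hx, Real.coe_toNNReal _ hy] at h2
  exact h2

/-- Key pointwise estimate. -/
lemma fbm_key_pointwise {H ε x δ : ℝ} (hH0 : 0 < H) (hH1 : 2 * H < 1) (hε0 : 0 < ε)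
    (hεH : ε < 2 * H) (hx : 0 < x) (hδ : 0 < δ) :
    x ^ (2 * H - 1) - (x + δ) ^ (2 * H - 1) ≤
      (1 - 2 * H) / (2 * H - ε) * δ ^ (2 * H - ε) * x ^ (ε - 1) := by
  have hβ : 0 < 2 * H - ε := by linarith
  have hxδ : x ≤ x + δ := by linarith
  have h1 : (∫ y in x..(x + δ), (2 * H - 1) * y ^ (2 * H - 2)) =
      (x + δ) ^ (2 * H - 1) - x ^ (2 * H - 1) := by
    apply integral_eq_sub_of_hasDerivAt_of_le (f := fun y : ℝ => y ^ (2 * H - 1))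
      (f' := fun y : ℝ => (2 * H - 1) * y ^ (2 * H - 2)) hxδ
    · exact ContinuousOn.rpow_const continuousOn_id
        (fun y hy => Or.inl (ne_of_gt (lt_of_lt_of_le hx hy.1)))
    · intro y hy
      have hy0 : y ≠ 0 := ne_of_gt (lt_trans hx hy.1)
      have h := Real.hasDerivAt_rpow_const (x := y) (p := 2 * H - 1) (Or.inl hy0)
      have e : 2 * H - 1 - 1 = 2 * H - 2 := by ring
      rwa [e] at h
    · apply ContinuousOn.intervalIntegrable
      apply ContinuousOn.mul continuousOn_const
      apply ContinuousOn.rpow_const continuousOn_id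
      intro y hy
      rw [uIcc_of_le hxδ] at hy
      exact Or.inl (ne_of_gt (lt_of_lt_of_le hx hy.1))
  have h2 : (∫ y in x..(x + δ), (1 - 2 * H) * y ^ (2 * H - 2)) ≤
      ∫ y in x..(x + δ), (1 - 2 * H) * x ^ (ε - 1) * y ^ (2 * H - ε - 1) := by
    apply integral_mono_on hxδ
    · apply ContinuousOn.intervalIntegrable
      apply ContinuousOn.mul continuousOn_const
      apply ContinuousOn.rpow_const continuousOn_id
      intro y hy
      rw [uIcc_of_le hxδ] at hy
      exact Or.inl (ne_of_gt (lt_of_lt_of_le hx hy.1))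
    · apply ContinuousOn.intervalIntegrable
      apply ContinuousOn.mul continuousOn_const
      apply ContinuousOn.rpow_const continuousOn_id
      intro y hy
      rw [uIcc_of_le hxδ] at hy
      exact Or.inl (ne_of_gt (lt_of_lt_of_le hx hy.1))
    · intro y hy
      have hy0 : 0 < y := lt_of_lt_of_le hx hy.1
      have hsplit : y ^ (2 * H - 2) = y ^ (ε - 1) * y ^ (2 * H - ε - 1) := by
        rw [← Real.rpow_add hy0]
        congr 1
        ring
      have hle : y ^ (ε - 1) ≤ x ^ (ε - 1) :=
        Real.rpow_le_rpow_of_nonpos hx hy.1 (by linarith)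
      rw [hsplit, mul_assoc]
      apply mul_le_mul_of_nonneg_left _ (by linarith)
      exact mul_le_mul_of_nonneg_right hle (Real.rpow_nonneg hy0.le _)
  have h3 : (∫ y in x..(x + δ), y ^ (2 * H - ε - 1)) =
      ((x + δ) ^ (2 * H - ε) - x ^ (2 * H - ε)) / (2 * H - ε) := by
    rw [integral_rpow (Or.inl (by linarith))]
    have h' : 2 * H - ε - 1 + 1 = 2 * H - ε := by ring
    rw [h']
  have h4 : (x + δ) ^ (2 * H - ε) - x ^ (2 * H - ε) ≤ δ ^ (2 * H - ε) := by
    have := add_rpow_le_rpow_add_rpow hx.le hδ.le hβ.le (by linarith)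
    linarith
  have h5 : (∫ y in x..(x + δ), (1 - 2 * H) * y ^ (2 * H - 2)) =
      x ^ (2 * H - 1) - (x + δ) ^ (2 * H - 1) := by
    have : (∫ y in x..(x + δ), (1 - 2 * H) * y ^ (2 * H - 2)) =
        -(∫ y in x..(x + δ), (2 * H - 1) * y ^ (2 * H - 2)) := by
      rw [← intervalIntegral.integral_neg]
      congr 1; funext y; ring
    rw [this, h1]; ring
  have h6 : (∫ y in x..(x + δ), (1 - 2 * H) * x ^ (ε - 1) * y ^ (2 * H - ε - 1)) =
      (1 - 2 * H) * x ^ (ε - 1) * (((x + δ) ^ (2 * H - ε) - x ^ (2 * H - ε)) / (2 * H - ε)) := by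
    rw [intervalIntegral.integral_const_mul, h3]
  rw [h5, h6] at h2
  have hxε : 0 ≤ x ^ (ε - 1) := Real.rpow_nonneg hx.le _
  calc x ^ (2 * H - 1) - (x + δ) ^ (2 * H - 1)
      ≤ (1 - 2 * H) * x ^ (ε - 1) *
        (((x + δ) ^ (2 * H - ε) - x ^ (2 * H - ε)) / (2 * H - ε)) := h2
    _ ≤ (1 - 2 * H) * x ^ (ε - 1) * (δ ^ (2 * H - ε) / (2 * H - ε)) := by
        apply mul_le_mul_of_nonneg_left _ (mul_nonneg (by linarith) hxε)
        gcongr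
    _ = (1 - 2 * H) / (2 * H - ε) * δ ^ (2 * H - ε) * x ^ (ε - 1) := by ring

/-- For `H ∈ (0,1/2)`, `ε ∈ (0,2H)` and `0 ≤ s' < t' ≤ s < t`, the integral
`∫_s^t (u−t')^{ε−1} du` is finite, equal to `((t−t')^ε − (s−t')^ε)/ε`, and
`|ρ_H(s',t';s,t)| ≤ (H(1−2H)/(2H−ε)) (t'−s')^{2H−ε} ∫_s^t (u−t')^{ε−1} du`. -/
theorem fbmCov_abs_le (H ε : ℝ) (hH : H ∈ Ioo (0 : ℝ) (1 / 2)) (hε : ε ∈ Ioo 0 (2 * H))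
    (s' t' s t : ℝ) (h0 : 0 ≤ s') (h1 : s' < t') (h2 : t' ≤ s) (h3 : s < t) :
    IntervalIntegrable (fun u => (u - t') ^ (ε - 1)) volume s t ∧
      (∫ u in s..t, (u - t') ^ (ε - 1)) = ((t - t') ^ ε - (s - t') ^ ε) / ε ∧
      |fbmCov H s' t' s t| ≤
        H * (1 - 2 * H) / (2 * H - ε) * (t' - s') ^ (2 * H - ε) *
          ∫ u in s..t, (u - t') ^ (ε - 1) := by
  obtain ⟨hH0, hH1⟩ := hH
  obtain ⟨hε0, hεH⟩ := hε
  have hH1' : 2 * H < 1 := by linarith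
  have h2H0 : (0 : ℝ) < 2 * H := by linarith
  have hint : IntervalIntegrable (fun u => (u - t') ^ (ε - 1)) volume s t := by
    have := (intervalIntegrable_rpow' (a := s - t') (b := t - t')
      (by linarith : (-1 : ℝ) < ε - 1)).comp_sub_right t'
    simpa using this
  have hval : (∫ u in s..t, (u - t') ^ (ε - 1)) = ((t - t') ^ ε - (s - t') ^ ε) / ε := by
    rw [intervalIntegral.integral_comp_sub_right (fun x => x ^ (ε - 1)) t',
      integral_rpow (Or.inl (by linarith))]
    have h' : ε - 1 + 1 = ε := by ring
    rw [h']
  refine ⟨hint, hval, ?_⟩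
  set F : ℝ → ℝ := fun u => (u - s') ^ (2 * H) - (u - t') ^ (2 * H) with hF
  set G : ℝ → ℝ := fun u => 2 * H * ((u - s') ^ (2 * H - 1) - (u - t') ^ (2 * H - 1)) with hG
  have hGint : IntervalIntegrable G volume s t := by
    apply IntervalIntegrable.const_mul
    apply IntervalIntegrable.sub
    · apply ContinuousOn.intervalIntegrable
      apply ContinuousOn.rpow_const (continuousOn_id.sub continuousOn_const)
      intro u hu
      rw [uIcc_of_le h3.le] at hu
      left
      simp only [Pi.sub_apply, id_eq]
      have := hu.1
      intro hcontra
      linarith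
    · have := (intervalIntegrable_rpow' (a := s - t') (b := t - t')
        (by linarith : (-1 : ℝ) < 2 * H - 1)).comp_sub_right t'
      simpa using this
  have hFTC : (∫ u in s..t, G u) = F t - F s := by
    apply integral_eq_sub_of_hasDerivAt_of_le h3.le
    · apply ContinuousOn.sub
      · exact ContinuousOn.rpow_const (continuousOn_id.sub continuousOn_const)
          (fun u hu => Or.inr h2H0.le)
      · exact ContinuousOn.rpow_const (continuousOn_id.sub continuousOn_const)
          (fun u hu => Or.inr h2H0.le)
    · intro u hu
      have hus' : (0 : ℝ) < u - s' := by linarith [hu.1]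
      have hut' : (0 : ℝ) < u - t' := by linarith [hu.1]
      have d1 : HasDerivAt (fun u : ℝ => (u - s') ^ (2 * H))
          (2 * H * (u - s') ^ (2 * H - 1)) u := by
        have := (Real.hasDerivAt_rpow_const (x := u - s') (p := 2 * H)
          (Or.inl (ne_of_gt hus'))).comp u ((hasDerivAt_id u).sub_const s')
        simpa [Function.comp_def] using this
      have d2 : HasDerivAt (fun u : ℝ => (u - t') ^ (2 * H))
          (2 * H * (u - t') ^ (2 * H - 1)) u := by
        have := (Real.hasDerivAt_rpow_const (x := u - t') (p := 2 * H)
          (Or.inl (ne_of_gt hut'))).comp u ((hasDerivAt_id u).sub_const t')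
        simpa [Function.comp_def] using this
      have := d1.sub d2
      convert this using 1
      · rfl
      show 2 * H * ((u - s') ^ (2 * H - 1) - (u - t') ^ (2 * H - 1)) = _; ring
    · exact hGint
  have hcov : fbmCov H s' t' s t = (F t - F s) / 2 := by
    unfold fbmCov
    rw [abs_of_nonneg (by linarith : (0:ℝ) ≤ t - s'), abs_of_nonneg (by linarith : (0:ℝ) ≤ s - t'),
      abs_of_nonneg (by linarith : (0:ℝ) ≤ s - s'), abs_of_nonneg (by linarith : (0:ℝ) ≤ t - t')]
    simp only [hF]
    ring
  set c : ℝ := 2 * H * ((1 - 2 * H) / (2 * H - ε) * (t' - s') ^ (2 * H - ε)) with hc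
  have hbound : ∀ u ∈ Set.uIoc s t, ‖G u‖ ≤ c * (u - t') ^ (ε - 1) := by
    intro u hu
    rw [uIoc_of_le h3.le] at hu
    have hut' : (0 : ℝ) < u - t' := by linarith [hu.1]
    have hδ : (0 : ℝ) < t' - s' := by linarith
    have hsum : u - s' = (u - t') + (t' - s') := by ring
    have hGle : G u ≤ 0 := by
      simp only [hG]
      apply mul_nonpos_of_nonneg_of_nonpos h2H0.le
      have : (u - t') ^ (2 * H - 1) ≥ (u - s') ^ (2 * H - 1) := by
        apply Real.rpow_le_rpow_of_nonpos hut' (by linarith) (by linarith)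
      linarith
    rw [Real.norm_eq_abs, abs_of_nonpos hGle]
    have key := fbm_key_pointwise (x := u - t') (δ := t' - s') hH0 hH1' hε0 hεH hut' hδ
    rw [← hsum] at key
    have : -G u = 2 * H * ((u - t') ^ (2 * H - 1) - (u - s') ^ (2 * H - 1)) := by
      simp only [hG]; ring
    rw [this, hc]
    calc 2 * H * ((u - t') ^ (2 * H - 1) - (u - s') ^ (2 * H - 1))
        ≤ 2 * H * ((1 - 2 * H) / (2 * H - ε) * (t' - s') ^ (2 * H - ε) * (u - t') ^ (ε - 1)) :=
          mul_le_mul_of_nonneg_left key h2H0.le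
      _ = 2 * H * ((1 - 2 * H) / (2 * H - ε) * (t' - s') ^ (2 * H - ε)) * (u - t') ^ (ε - 1) := by
          ring
  have hc0 : 0 ≤ c := by
    rw [hc]
    exact mul_nonneg (by linarith)
      (mul_nonneg (div_nonneg (by linarith) (by linarith)) (Real.rpow_nonneg (by linarith) _))
  have hI0 : 0 ≤ ∫ u in s..t, (u - t') ^ (ε - 1) := by
    rw [hval]
    have : (s - t') ^ ε ≤ (t - t') ^ ε :=
      Real.rpow_le_rpow (by linarith) (by linarith) hε0.le
    have h'' : (0:ℝ) ≤ ((t - t') ^ ε - (s - t') ^ ε) := by linarith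
    exact div_nonneg h'' hε0.le
  have habs : ‖∫ u in s..t, G u‖ ≤ |∫ u in s..t, c * (u - t') ^ (ε - 1)| := by
    apply intervalIntegral.norm_integral_le_abs_of_norm_le
    · exact (ae_restrict_iff' measurableSet_uIoc).2 (Filter.Eventually.of_forall hbound)
    · exact hint.const_mul c
  rw [hFTC, intervalIntegral.integral_const_mul,
    abs_of_nonneg (mul_nonneg hc0 hI0)] at habs
  rw [hcov, abs_div, abs_two, Real.norm_eq_abs] at *
  calc |F t - F s| / 2 ≤ (c * ∫ u in s..t, (u - t') ^ (ε - 1)) / 2 := by linarith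
    _ = H * (1 - 2 * H) / (2 * H - ε) * (t' - s') ^ (2 * H - ε) *
        ∫ u in s..t, (u - t') ^ (ε - 1) := by rw [hc]; ring
end

section
/- Let H ∈ (1/4, 1/2) and let p' ∈ (1/H, 4). Then there exists a constant C, depending only on H and p', such that for every finite increasing sequence of reals t_m < t_{m+1} < ... < t_n one has Σ_{k=m}^{n−1} Σ_{l=m}^{n−1} (t_{k+1}−t_k)^H (t_{l+1}−t_l)^H |ρ_H(t_k,t_{k+1}; t_l,t_{l+1})| ≤ C (t_n − t_m)^{4/p'} |D|^{4H − 4/p'}, where |D| = max_{m ≤ k ≤ n−1} (t_{k+1} − t_k). -/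
open Set

private lemma telescope_sum (g : ℕ → ℝ) {a b : ℕ} (h : a ≤ b) :
    ∑ k ∈ Finset.Ico a b, (g k - g (k + 1)) = g a - g b := by
  induction b, h using Nat.le_induction with
  | base => simp
  | succ b hb ih => rw [Finset.sum_Ico_succ_top hb, ih]; ring

private lemma concave4 {e : ℝ} (he : 0 < e) (he1 : e < 1) {p q r : ℝ}
    (hp : 0 ≤ p) (hq : 0 ≤ q) (hr : 0 ≤ r) :
    q ^ e + (p + q + r) ^ e ≤ (p + q) ^ e + (q + r) ^ e := by
  rcases eq_or_lt_of_le (by linarith : (0:ℝ) ≤ p + r) with h0 | h0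
  · have hp0 : p = 0 := by linarith
    have hr0 : r = 0 := by linarith
    subst hp0; subst hr0
    simp only [zero_add, add_zero]
    linarith
  · have hconc := Real.concaveOn_rpow he.le he1.le
    have h1 := hconc.2 (Set.mem_Ici.mpr hq) (Set.mem_Ici.mpr (by linarith : (0:ℝ) ≤ p + q + r))
      (div_nonneg hr h0.le) (div_nonneg hp h0.le)
      (by field_simp; try ring)
    have h2 := hconc.2 (Set.mem_Ici.mpr hq) (Set.mem_Ici.mpr (by linarith : (0:ℝ) ≤ p + q + r))
      (div_nonneg hp h0.le) (div_nonneg hr h0.le)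
      (by field_simp; try ring)
    have e1 : (r / (p + r)) • q + (p / (p + r)) • (p + q + r) = p + q := by
      simp only [smul_eq_mul]; field_simp; try ring
    have e2 : (p / (p + r)) • q + (r / (p + r)) • (p + q + r) = q + r := by
      simp only [smul_eq_mul]; field_simp; try ring
    rw [e1] at h1
    rw [e2] at h2
    have hsum : (r / (p + r)) + (p / (p + r)) = 1 := by
      field_simp; try ring
    have h3 := add_le_add h1 h2
    simp only [smul_eq_mul] at h3
    have key : r / (p + r) * q ^ e + p / (p + r) * (p + q + r) ^ e +
        (p / (p + r) * q ^ e + r / (p + r) * (p + q + r) ^ e) =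
        (r / (p + r) + p / (p + r)) * (q ^ e + (p + q + r) ^ e) := by ring
    rw [key, hsum, one_mul] at h3
    linarith

private lemma fbmCov_symm (H a b c d : ℝ) : fbmCov H a b c d = fbmCov H c d a b := by
  unfold fbmCov
  rw [abs_sub_comm d a, abs_sub_comm c b, abs_sub_comm c a, abs_sub_comm d b]
  ring

private lemma fbmCov_nonpos {H : ℝ} (h0 : 0 < 2 * H) (h1 : 2 * H < 1) {a b c d : ℝ}
    (hab : a ≤ b) (hbc : b ≤ c) (hcd : c ≤ d) : fbmCov H a b c d ≤ 0 := by
  unfold fbmCov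
  have e1 : |d - a| = (b - a) + (c - b) + (d - c) := by
    rw [abs_of_nonneg (by linarith)]; ring
  have e2 : |c - b| = c - b := abs_of_nonneg (by linarith)
  have e3 : |c - a| = (b - a) + (c - b) := by
    rw [abs_of_nonneg (by linarith)]; ring
  have e4 : |d - b| = (c - b) + (d - c) := by
    rw [abs_of_nonneg (by linarith)]; ring
  rw [e1, e2, e3, e4]
  have h := concave4 h0 h1 (show (0:ℝ) ≤ b - a by linarith)
    (show (0:ℝ) ≤ c - b by linarith) (show (0:ℝ) ≤ d - c by linarith)
  linarith

private lemma fbmCov_adj {H : ℝ} (h0 : 2 * H ≠ 0) (hexp : 0 ≤ 2 * H) {a b d : ℝ}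
    (hab : a ≤ b) (hbd : b ≤ d) :
    -fbmCov H a b b d ≤ (b - a) ^ (2 * H) / 2 ∧
      -fbmCov H a b b d ≤ (d - b) ^ (2 * H) / 2 := by
  unfold fbmCov
  rw [sub_self, abs_zero, Real.zero_rpow h0,
    abs_of_nonneg (show (0:ℝ) ≤ d - a by linarith),
    abs_of_nonneg (show (0:ℝ) ≤ b - a by linarith),
    abs_of_nonneg (show (0:ℝ) ≤ d - b by linarith)]
  constructor
  · have : (d - b) ^ (2 * H) ≤ (d - a) ^ (2 * H) :=
      Real.rpow_le_rpow (by linarith) (by linarith) hexp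
    linarith
  · have : (b - a) ^ (2 * H) ≤ (d - a) ^ (2 * H) :=
      Real.rpow_le_rpow (by linarith) (by linarith) hexp
    linarith

private lemma fbmCov_diag {H : ℝ} (h0 : 2 * H ≠ 0) {a b : ℝ} (hab : a ≤ b) :
    fbmCov H a b a b = (b - a) ^ (2 * H) := by
  unfold fbmCov
  rw [abs_sub_comm a b]
  simp only [sub_self, abs_zero, Real.zero_rpow h0]
  rw [abs_of_nonneg (show (0:ℝ) ≤ b - a by linarith)]
  ring

private lemma fbmCov_sum_first (H c d : ℝ) (t : ℕ → ℝ) {u v : ℕ} (huv : u ≤ v) :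
    ∑ l ∈ Finset.Ico u v, fbmCov H (t l) (t (l + 1)) c d = fbmCov H (t u) (t v) c d := by
  have heq : ∀ l ∈ Finset.Ico u v, fbmCov H (t l) (t (l + 1)) c d =
      (fun x => (|d - t x| ^ (2 * H) - |c - t x| ^ (2 * H)) / 2) l -
      (fun x => (|d - t x| ^ (2 * H) - |c - t x| ^ (2 * H)) / 2) (l + 1) := by
    intro l _; unfold fbmCov; ring
  rw [Finset.sum_congr rfl heq, telescope_sum _ huv]
  unfold fbmCov; ring
/-- For `H ∈ (1/4,1/2)` and `p' ∈ (1/H,4)` there is a constant `C = C(H,p')` such that for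
every subdivision `t_m < … < t_n`,
`Σ_{k,l} (t_{k+1}−t_k)^H (t_{l+1}−t_l)^H |ρ_H(t_k,t_{k+1};t_l,t_{l+1})|
  ≤ C (t_n−t_m)^{4/p'} |D|^{4H−4/p'}` where `|D|` is the mesh of the subdivision. -/
theorem fbmCov_subdivision_weighted_sum_le (H p' : ℝ)
    (hH : H ∈ Ioo (1 / 4 : ℝ) (1 / 2)) (hp' : p' ∈ Ioo (1 / H) 4) :
    ∃ C : ℝ, ∀ (m n : ℕ) (hmn : m < n) (t : ℕ → ℝ),
      (∀ k, m ≤ k → k < n → t k < t (k + 1)) →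
      ∑ k ∈ Finset.Ico m n, ∑ l ∈ Finset.Ico m n,
          (t (k + 1) - t k) ^ H * (t (l + 1) - t l) ^ H *
            |fbmCov H (t k) (t (k + 1)) (t l) (t (l + 1))| ≤
        C * (t n - t m) ^ (4 / p') *
          ((Finset.Ico m n).sup' (Finset.nonempty_Ico.mpr hmn)
              fun k => t (k + 1) - t k) ^ (4 * H - 4 / p') := by
  obtain ⟨hH1, hH2⟩ := hH
  obtain ⟨hp1, hp2⟩ := hp'
  have hHpos : 0 < H := by linarith
  have h2H0 : 0 < 2 * H := by linarith
  have h2H1 : 2 * H < 1 := by linarith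
  have h2Hne : 2 * H ≠ 0 := by linarith
  have hp'pos : 0 < p' := lt_trans (by positivity : (0:ℝ) < 1 / H) hp1
  have h4p1 : 1 < 4 / p' := (one_lt_div hp'pos).mpr hp2
  refine ⟨2, ?_⟩
  intro m n hmn t ht
  set D := ((Finset.Ico m n).sup' (Finset.nonempty_Ico.mpr hmn) fun k => t (k + 1) - t k)
    with hD
  have hlt : ∀ j i, m ≤ i → i < j → j ≤ n → t i < t j := by
    intro j
    induction j with
    | zero => intro i _ h _; omega
    | succ j ih =>
      intro i hi hij hjn
      rcases Nat.lt_succ_iff_lt_or_eq.mp hij with h | h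
      · exact (ih i hi h (by omega)).trans (ht j (by omega) (by omega))
      · subst h; exact ht i hi (by omega)
  have hle : ∀ i j, m ≤ i → i ≤ j → j ≤ n → t i ≤ t j := by
    intro i j hi hij hj
    rcases eq_or_lt_of_le hij with h | h
    · subst h; exact le_refl _
    · exact (hlt j i hi h hj).le
  have hT : 0 < t n - t m := by have := hlt n m le_rfl hmn le_rfl; linarith
  have hΔpos : ∀ k ∈ Finset.Ico m n, 0 < t (k + 1) - t k := by
    intro k hk
    rw [Finset.mem_Ico] at hk
    have := ht k hk.1 hk.2; linarith
  have hΔleD : ∀ k ∈ Finset.Ico m n, t (k + 1) - t k ≤ D := by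
    intro k hk
    rw [hD]
    exact Finset.le_sup' (fun k => t (k + 1) - t k) hk
  have hDpos : 0 < D :=
    lt_of_lt_of_le (hΔpos m (Finset.mem_Ico.mpr ⟨le_rfl, hmn⟩))
      (hΔleD m (Finset.mem_Ico.mpr ⟨le_rfl, hmn⟩))
  have hDleT : D ≤ t n - t m := by
    rw [hD]
    apply Finset.sup'_le
    intro k hk
    rw [Finset.mem_Ico] at hk
    have h1 := hle m k le_rfl hk.1 (by omega)
    have h2 := hle (k + 1) n (by omega) (by omega) le_rfl
    linarith
  -- row sums
  have row : ∀ k ∈ Finset.Ico m n,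
      ∑ l ∈ Finset.Ico m n, |fbmCov H (t k) (t (k + 1)) (t l) (t (l + 1))| ≤
        2 * (t (k + 1) - t k) ^ (2 * H) := by
    intro k hk
    rw [Finset.mem_Ico] at hk
    obtain ⟨hmk, hkn⟩ := hk
    rw [← Finset.sum_Ico_consecutive
        (fun l => |fbmCov H (t k) (t (k + 1)) (t l) (t (l + 1))|) hmk (le_of_lt hkn),
      Finset.sum_eq_sum_Ico_succ_bot hkn]
    have hlow : ∑ l ∈ Finset.Ico m k, |fbmCov H (t k) (t (k + 1)) (t l) (t (l + 1))| ≤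
        (t (k + 1) - t k) ^ (2 * H) / 2 := by
      have heq : ∀ l ∈ Finset.Ico m k, |fbmCov H (t k) (t (k + 1)) (t l) (t (l + 1))| =
          -fbmCov H (t l) (t (l + 1)) (t k) (t (k + 1)) := by
        intro l hl
        rw [Finset.mem_Ico] at hl
        rw [fbmCov_symm]
        exact abs_of_nonpos (fbmCov_nonpos h2H0 h2H1
          (hle l (l + 1) hl.1 (by omega) (by omega))
          (hle (l + 1) k (by omega) (by omega) (by omega))
          (hle k (k + 1) hmk (by omega) (by omega)))
      rw [Finset.sum_congr rfl heq, Finset.sum_neg_distrib,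
        fbmCov_sum_first H (t k) (t (k + 1)) t hmk]
      exact (fbmCov_adj h2Hne h2H0.le (hle m k le_rfl hmk (by omega))
        (hle k (k + 1) hmk (by omega) (by omega))).2
    have hdiag : |fbmCov H (t k) (t (k + 1)) (t k) (t (k + 1))| =
        (t (k + 1) - t k) ^ (2 * H) := by
      rw [fbmCov_diag h2Hne (hle k (k + 1) hmk (by omega) (by omega))]
      exact abs_of_nonneg (Real.rpow_nonneg (by
        have := hΔpos k (Finset.mem_Ico.mpr ⟨hmk, hkn⟩); linarith) _)
    have hhigh : ∑ l ∈ Finset.Ico (k + 1) n, |fbmCov H (t k) (t (k + 1)) (t l) (t (l + 1))| ≤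
        (t (k + 1) - t k) ^ (2 * H) / 2 := by
      have heq : ∀ l ∈ Finset.Ico (k + 1) n, |fbmCov H (t k) (t (k + 1)) (t l) (t (l + 1))| =
          -fbmCov H (t l) (t (l + 1)) (t k) (t (k + 1)) := by
        intro l hl
        rw [Finset.mem_Ico] at hl
        have hnp : fbmCov H (t l) (t (l + 1)) (t k) (t (k + 1)) ≤ 0 := by
          rw [fbmCov_symm]
          exact fbmCov_nonpos h2H0 h2H1 (hle k (k + 1) hmk (by omega) (by omega))
            (hle (k + 1) l (by omega) (by omega) (by omega))
            (hle l (l + 1) (by omega) (by omega) hl.2)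
        rw [fbmCov_symm]
        exact abs_of_nonpos hnp
      rw [Finset.sum_congr rfl heq, Finset.sum_neg_distrib,
        fbmCov_sum_first H (t k) (t (k + 1)) t (show k + 1 ≤ n by omega),
        fbmCov_symm]
      exact (fbmCov_adj h2Hne h2H0.le (hle k (k + 1) hmk (by omega) (by omega))
        (hle (k + 1) n (by omega) (by omega) le_rfl)).1
    rw [hdiag]
    linarith
  -- pointwise AM-GM bound
  have key1 : ∑ k ∈ Finset.Ico m n, ∑ l ∈ Finset.Ico m n,
      (t (k + 1) - t k) ^ H * (t (l + 1) - t l) ^ H *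
        |fbmCov H (t k) (t (k + 1)) (t l) (t (l + 1))| ≤
      ∑ k ∈ Finset.Ico m n, ∑ l ∈ Finset.Ico m n,
        (((t (k + 1) - t k) ^ (2 * H) + (t (l + 1) - t l) ^ (2 * H)) / 2) *
          |fbmCov H (t k) (t (k + 1)) (t l) (t (l + 1))| := by
    apply Finset.sum_le_sum
    intro k hk
    apply Finset.sum_le_sum
    intro l hl
    have hk' := hΔpos k hk
    have hl' := hΔpos l hl
    apply mul_le_mul_of_nonneg_right _ (abs_nonneg _)
    have hsq : ∀ x : ℝ, 0 < x → x ^ (2 * H) = x ^ H * x ^ H := by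
      intro x hx
      rw [← Real.rpow_add hx]
      ring_nf
    rw [hsq _ hk', hsq _ hl']
    nlinarith [sq_nonneg ((t (k + 1) - t k) ^ H - (t (l + 1) - t l) ^ H)]
  -- symmetrization
  have key2 : ∑ k ∈ Finset.Ico m n, ∑ l ∈ Finset.Ico m n,
      (((t (k + 1) - t k) ^ (2 * H) + (t (l + 1) - t l) ^ (2 * H)) / 2) *
        |fbmCov H (t k) (t (k + 1)) (t l) (t (l + 1))| =
      ∑ k ∈ Finset.Ico m n, (t (k + 1) - t k) ^ (2 * H) *
        ∑ l ∈ Finset.Ico m n, |fbmCov H (t k) (t (k + 1)) (t l) (t (l + 1))| := by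
    have hsplit : ∀ k l : ℕ,
        (((t (k + 1) - t k) ^ (2 * H) + (t (l + 1) - t l) ^ (2 * H)) / 2) *
          |fbmCov H (t k) (t (k + 1)) (t l) (t (l + 1))| =
        (t (k + 1) - t k) ^ (2 * H) * |fbmCov H (t k) (t (k + 1)) (t l) (t (l + 1))| / 2 +
        (t (l + 1) - t l) ^ (2 * H) * |fbmCov H (t k) (t (k + 1)) (t l) (t (l + 1))| / 2 := by
      intro k l; ring
    simp only [hsplit, Finset.sum_add_distrib]
    have hcomm : ∑ k ∈ Finset.Ico m n, ∑ l ∈ Finset.Ico m n,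
        (t (l + 1) - t l) ^ (2 * H) * |fbmCov H (t k) (t (k + 1)) (t l) (t (l + 1))| / 2 =
        ∑ k ∈ Finset.Ico m n, ∑ l ∈ Finset.Ico m n,
        (t (k + 1) - t k) ^ (2 * H) * |fbmCov H (t k) (t (k + 1)) (t l) (t (l + 1))| / 2 := by
      rw [Finset.sum_comm]
      apply Finset.sum_congr rfl
      intro k _
      apply Finset.sum_congr rfl
      intro l _
      rw [fbmCov_symm]
    rw [hcomm]
    rw [← Finset.sum_add_distrib]
    apply Finset.sum_congr rfl
    intro k _
    rw [Finset.mul_sum]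
    rw [← Finset.sum_add_distrib]
    apply Finset.sum_congr rfl
    intro l _
    ring
  -- apply row bound
  have key3 : ∑ k ∈ Finset.Ico m n, (t (k + 1) - t k) ^ (2 * H) *
      ∑ l ∈ Finset.Ico m n, |fbmCov H (t k) (t (k + 1)) (t l) (t (l + 1))| ≤
      ∑ k ∈ Finset.Ico m n, 2 * ((t (k + 1) - t k) * D ^ (4 * H - 1)) := by
    apply Finset.sum_le_sum
    intro k hk
    have hk' := hΔpos k hk
    have hkD := hΔleD k hk
    have step1 : (t (k + 1) - t k) ^ (2 * H) *
        ∑ l ∈ Finset.Ico m n, |fbmCov H (t k) (t (k + 1)) (t l) (t (l + 1))| ≤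
        (t (k + 1) - t k) ^ (2 * H) * (2 * (t (k + 1) - t k) ^ (2 * H)) :=
      mul_le_mul_of_nonneg_left (row k hk) (Real.rpow_nonneg hk'.le _)
    have step2 : (t (k + 1) - t k) ^ (2 * H) * (2 * (t (k + 1) - t k) ^ (2 * H)) =
        2 * (t (k + 1) - t k) ^ (4 * H) := by
      rw [show (t (k + 1) - t k) ^ (2*H) * (2 * (t (k + 1) - t k) ^ (2*H)) =
        2 * ((t (k + 1) - t k) ^ (2*H) * (t (k + 1) - t k) ^ (2*H)) from by ring,
        ← Real.rpow_add hk']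
      ring_nf
    have step3 : (t (k + 1) - t k) ^ (4 * H) ≤ (t (k + 1) - t k) * D ^ (4 * H - 1) := by
      have e1 : (t (k + 1) - t k) ^ (4 * H) =
          (t (k + 1) - t k) * (t (k + 1) - t k) ^ (4 * H - 1) := by
        conv_lhs => rw [show 4 * H = 1 + (4 * H - 1) by ring]
        rw [Real.rpow_add hk', Real.rpow_one]
      rw [e1]
      apply mul_le_mul_of_nonneg_left _ (by linarith)
      exact Real.rpow_le_rpow hk'.le hkD (by linarith)
    calc (t (k + 1) - t k) ^ (2 * H) *
        ∑ l ∈ Finset.Ico m n, |fbmCov H (t k) (t (k + 1)) (t l) (t (l + 1))|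
        ≤ 2 * (t (k + 1) - t k) ^ (4 * H) := by rw [← step2]; exact step1
      _ ≤ 2 * ((t (k + 1) - t k) * D ^ (4 * H - 1)) := by linarith
  have hsumΔ : ∑ k ∈ Finset.Ico m n, (t (k + 1) - t k) = t n - t m := by
    have h1 := telescope_sum t (le_of_lt hmn)
    have h2 : ∑ k ∈ Finset.Ico m n, (t (k + 1) - t k) =
        -∑ k ∈ Finset.Ico m n, (t k - t (k + 1)) := by
      rw [← Finset.sum_neg_distrib]
      apply Finset.sum_congr rfl
      intros; ring
    rw [h2, h1]; ring
  have key4 : ∑ k ∈ Finset.Ico m n, 2 * ((t (k + 1) - t k) * D ^ (4 * H - 1)) =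
      2 * ((t n - t m) * D ^ (4 * H - 1)) := by
    rw [← Finset.mul_sum, ← Finset.sum_mul, hsumΔ]
  -- final exponent juggling
  have hfin : 2 * ((t n - t m) * D ^ (4 * H - 1)) ≤
      2 * (t n - t m) ^ (4 / p') * D ^ (4 * H - 4 / p') := by
    have hDe : D ^ (4 / p' - 1) ≤ (t n - t m) ^ (4 / p' - 1) :=
      Real.rpow_le_rpow hDpos.le hDleT (by linarith)
    have h1 : D ^ (4 * H - 1) = D ^ (4 * H - 4 / p') * D ^ (4 / p' - 1) := by
      rw [← Real.rpow_add hDpos]; ring_nf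
    have h2 : (t n - t m) ^ (4 / p') = (t n - t m) * (t n - t m) ^ (4 / p' - 1) := by
      conv_lhs => rw [show (4 / p') = 1 + (4 / p' - 1) by ring]
      rw [Real.rpow_add hT, Real.rpow_one]
    rw [h1, h2]
    have hDa : (0:ℝ) ≤ D ^ (4 * H - 4 / p') := Real.rpow_nonneg hDpos.le _
    have hDe0 : (0:ℝ) ≤ D ^ (4 / p' - 1) := Real.rpow_nonneg hDpos.le _
    nlinarith [mul_nonneg (mul_nonneg hT.le hDa)
      (sub_nonneg.mpr hDe)]
  calc ∑ k ∈ Finset.Ico m n, ∑ l ∈ Finset.Ico m n,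
      (t (k + 1) - t k) ^ H * (t (l + 1) - t l) ^ H *
        |fbmCov H (t k) (t (k + 1)) (t l) (t (l + 1))|
      ≤ ∑ k ∈ Finset.Ico m n, (t (k + 1) - t k) ^ (2 * H) *
          ∑ l ∈ Finset.Ico m n, |fbmCov H (t k) (t (k + 1)) (t l) (t (l + 1))| := by
        rw [← key2]; exact key1
    _ ≤ 2 * ((t n - t m) * D ^ (4 * H - 1)) := by rw [← key4]; exact key3
    _ ≤ 2 * (t n - t m) ^ (4 / p') * D ^ (4 * H - 4 / p') := hfin
end

section
/- Let H ∈ (0, 1/2) and let f : [0,1] → ℝ be a Lipschitz function with f(0) = 0. Then there exists g ∈ L²([0,1]) such that for every x ∈ [0,1], f(x) = (1/Γ(H + 1/2)) ∫_0^x (x−t)^{H − 1/2} g(t) dt. In other words, every W^{1,∞} path vanishing at 0 lies in the image of L²([0,1]) under the Riemann–Liouville fractional integral operator I_{0+}^{H+1/2}, which is the Cameron–Martin space of fractional Brownian motion with Hurst parameter H. -/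
open Set MeasureTheory

open Filter Topology

section FBMAux
lemma real_beta {a b : ℝ} (ha : 0 < a) (hb : 0 < b) :
    ∫ u in (0:ℝ)..1, u ^ (a - 1) * (1 - u) ^ (b - 1)
      = Real.Gamma a * Real.Gamma b / Real.Gamma (a + b) := by
  have hg : (0:ℝ) < Real.Gamma (a + b) := Real.Gamma_pos_of_pos (by linarith)
  have key : Complex.betaIntegral a b
      = ((∫ u in (0:ℝ)..1, u ^ (a - 1) * (1 - u) ^ (b - 1) : ℝ) : ℂ) := by
    rw [← intervalIntegral.integral_ofReal]
    unfold Complex.betaIntegral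
    refine intervalIntegral.integral_congr fun u hu => ?_
    rw [uIcc_of_le (by norm_num : (0:ℝ) ≤ 1)] at hu
    rw [Complex.ofReal_mul, Complex.ofReal_cpow hu.1, Complex.ofReal_cpow (by linarith [hu.2] : (0:ℝ) ≤ 1 - u)]
    push_cast
    ring_nf
  have h2 := Complex.Gamma_mul_Gamma_eq_betaIntegral
    (s := (a:ℂ)) (t := (b:ℂ)) (by simpa using ha) (by simpa using hb)
  rw [key] at h2
  have h3 : ((Real.Gamma a * Real.Gamma b : ℝ) : ℂ)
      = ((Real.Gamma (a+b) * ∫ u in (0:ℝ)..1, u ^ (a - 1) * (1 - u) ^ (b - 1) : ℝ) : ℂ) := by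
    push_cast [← Complex.Gamma_ofReal]
    simpa using h2
  have h4 := Complex.ofReal_injective h3
  field_simp
  linarith [h4]

lemma beta_kernel {a b s x : ℝ} (ha : 0 < a) (hb : 0 < b) (hab : a + b = 1) (hsx : s < x) :
    (∫ t in s..x, (x - t) ^ (a - 1) * (t - s) ^ (b - 1)) = Real.Gamma a * Real.Gamma b := by
  have hxs : 0 < x - s := by linarith
  have comp := intervalIntegral.integral_comp_mul_add (a := (0:ℝ)) (b := 1)
    (f := fun t => (x - t) ^ (a - 1) * (t - s) ^ (b - 1)) hxs.ne' s
  have hbounds1 : (x - s) * 0 + s = s := by ring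
  have hbounds2 : (x - s) * 1 + s = x := by ring
  rw [hbounds1, hbounds2, smul_eq_mul] at comp
  have lhs_eq : (∫ u in (0:ℝ)..1, (fun t => (x - t) ^ (a - 1) * (t - s) ^ (b - 1)) ((x - s) * u + s))
      = (x - s)⁻¹ * ∫ u in (0:ℝ)..1, u ^ (b - 1) * (1 - u) ^ (a - 1) := by
    rw [← intervalIntegral.integral_const_mul]
    refine intervalIntegral.integral_congr fun u hu => ?_
    rw [uIcc_of_le (by norm_num : (0:ℝ) ≤ 1)] at hu
    have h1 : x - ((x - s) * u + s) = (x - s) * (1 - u) := by ring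
    have h2 : (x - s) * u + s - s = (x - s) * u := by ring
    simp only [h1, h2]
    rw [Real.mul_rpow hxs.le (by linarith [hu.2]), Real.mul_rpow hxs.le hu.1]
    have : (x - s) ^ (a - 1) * (x - s) ^ (b - 1) = (x - s)⁻¹ := by
      rw [← Real.rpow_add hxs]
      have : a - 1 + (b - 1) = -1 := by linarith
      rw [this, Real.rpow_neg_one]
    calc (x - s) ^ (a - 1) * (1 - u) ^ (a - 1) * ((x - s) ^ (b - 1) * u ^ (b - 1))
        = ((x - s) ^ (a - 1) * (x - s) ^ (b - 1)) * ((1 - u) ^ (a - 1) * u ^ (b - 1)) := by ring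
      _ = (x - s)⁻¹ * (u ^ (b - 1) * (1 - u) ^ (a - 1)) := by rw [this]; ring
  rw [lhs_eq] at comp
  have hbeta := real_beta hb ha
  rw [show b + a = 1 by linarith, Real.Gamma_one, div_one] at hbeta
  have : (∫ t in s..x, (x - t) ^ (a - 1) * (t - s) ^ (b - 1))
      = (x - s) * ((x - s)⁻¹ * (Real.Gamma b * Real.Gamma a)) := by
    rw [← hbeta]
    field_simp at comp ⊢
    linarith [comp]
  rw [this]
  field_simp

lemma deriv_abs_le {K : NNReal} {F : ℝ → ℝ} (hF : LipschitzWith K F) (t : ℝ) :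
    |deriv F t| ≤ K := by
  by_cases h : DifferentiableAt ℝ F t
  · have h1 : ‖fderiv ℝ F t‖ ≤ K := norm_fderiv_le_of_lipschitz ℝ hF
    have h2 : deriv F t = fderiv ℝ F t 1 := by rw [fderiv_apply_one_eq_deriv]
    rw [h2, ← Real.norm_eq_abs]
    calc ‖fderiv ℝ F t 1‖ ≤ ‖fderiv ℝ F t‖ * ‖(1:ℝ)‖ := (fderiv ℝ F t).le_opNorm 1
      _ ≤ K := by simpa using h1
  · rw [deriv_zero_of_not_differentiableAt h]
    simpa using K.coe_nonneg

lemma lipschitz_tendsto_avg {K : NNReal} {F : ℝ → ℝ} (hF : LipschitzWith K F) (x : ℝ) :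
    Tendsto (fun n : ℕ => ((n:ℝ)+1) * ∫ t in x..(x + 1/((n:ℝ)+1)), F t) atTop (𝓝 (F x)) := by
  have hcont := hF.continuous
  have key : ∀ n : ℕ, ‖((n:ℝ)+1) * (∫ t in x..(x + 1/((n:ℝ)+1)), F t) - F x‖ ≤ K / ((n:ℝ)+1) := by
    intro n
    set c : ℝ := 1/((n:ℝ)+1) with hc
    have hn : (0:ℝ) < (n:ℝ)+1 := by positivity
    have hc0 : 0 < c := by positivity
    have e1 : (∫ t in x..(x+c), (F x : ℝ)) = c * F x := by
      simp [intervalIntegral.integral_const]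
    have e2 : ((n:ℝ)+1) * (∫ t in x..(x + c), F t) - F x
        = ((n:ℝ)+1) * ∫ t in x..(x+c), (F t - F x) := by
      rw [intervalIntegral.integral_sub (hcont.intervalIntegrable _ _)
        (intervalIntegrable_const), e1]
      rw [hc]
      field_simp
    rw [e2]
    have e3 : ‖∫ t in x..(x+c), (F t - F x)‖ ≤ (K * c) * |x + c - x| := by
      apply intervalIntegral.norm_integral_le_of_norm_le_const
      intro t ht
      have h1 : |t - x| ≤ c := by
        rw [uIoc_of_le (by linarith)] at ht
        rw [abs_le]; constructor <;> [linarith [ht.1]; linarith [ht.2]]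
      calc ‖F t - F x‖ ≤ K * |t - x| := by
            simpa [Real.dist_eq] using hF.dist_le_mul t x
        _ ≤ K * c := by
            exact mul_le_mul_of_nonneg_left h1 K.coe_nonneg
    rw [norm_mul]
    have : |x + c - x| = c := by rw [show x + c - x = c by ring, abs_of_pos hc0]
    rw [this] at e3
    calc ‖((n:ℝ)+1)‖ * ‖∫ t in x..(x+c), (F t - F x)‖
        ≤ ((n:ℝ)+1) * (K * c * c) := by
          apply mul_le_mul (le_of_eq (by rw [Real.norm_eq_abs, abs_of_pos hn])) e3
            (norm_nonneg _) hn.le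
      _ = K / ((n:ℝ)+1) := by rw [hc]; field_simp
  have hK : Tendsto (fun n : ℕ => (K:ℝ) / ((n:ℝ)+1)) atTop (𝓝 0) := by
    simpa using tendsto_one_div_add_atTop_nhds_zero_nat.const_mul (K:ℝ) |>.congr (fun n => by
      field_simp)
  have := squeeze_zero_norm key hK
  simpa [tendsto_sub_nhds_zero_iff] using this

lemma lipschitz_ftc {K : NNReal} {F : ℝ → ℝ} (hF : LipschitzWith K F) {x : ℝ} (hx : 0 ≤ x) :
    ∫ t in (0:ℝ)..x, deriv F t = F x - F 0 := by
  have hcont := hF.continuous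
  set c : ℕ → ℝ := fun n => 1/((n:ℝ)+1) with hcdef
  have hc0 : ∀ n, 0 < c n := fun n => by positivity
  set φ : ℕ → ℝ → ℝ := fun n t => (F (t + c n) - F t) * ((n:ℝ)+1) with hφdef
  -- step 1 : value of ∫ φ n
  have step1 : ∀ n : ℕ, (∫ t in (0:ℝ)..x, φ n t)
      = ((n:ℝ)+1) * (∫ t in x..(x + c n), F t) - ((n:ℝ)+1) * (∫ t in (0:ℝ)..(0 + c n), F t) := by
    intro n
    have i1 : (∫ t in (0:ℝ)..x, F (t + c n)) = ∫ t in (c n)..(x + c n), F t := by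
      simpa [zero_add] using intervalIntegral.integral_comp_add_right
        (a := (0:ℝ)) (b := x) (f := F) (c n)
    have I : ∀ a b : ℝ, IntervalIntegrable F volume a b := fun a b => hcont.intervalIntegrable _ _
    have add1 : (∫ t in (0:ℝ)..(c n), F t) + (∫ t in (c n)..(x + c n), F t)
        = ∫ t in (0:ℝ)..(x + c n), F t := intervalIntegral.integral_add_adjacent_intervals (I _ _) (I _ _)
    have add2 : (∫ t in (0:ℝ)..x, F t) + (∫ t in x..(x + c n), F t)
        = ∫ t in (0:ℝ)..(x + c n), F t := intervalIntegral.integral_add_adjacent_intervals (I _ _) (I _ _)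
    have : (∫ t in (0:ℝ)..x, φ n t)
        = ((∫ t in (0:ℝ)..x, F (t + c n)) - ∫ t in (0:ℝ)..x, F t) * ((n:ℝ)+1) := by
      rw [← intervalIntegral.integral_sub (((by continuity : Continuous fun t => F (t + c n))).intervalIntegrable _ _) (I _ _)]
      rw [← intervalIntegral.integral_mul_const]
    rw [this, i1, zero_add]
    have : (∫ t in (c n)..(x + c n), F t) - (∫ t in (0:ℝ)..x, F t)
        = (∫ t in x..(x + c n), F t) - (∫ t in (0:ℝ)..(c n), F t) := by linarith
    rw [this]; ring
  -- step 2 : RHS converges to F x - F 0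
  have step2 : Tendsto (fun n : ℕ => ((n:ℝ)+1) * (∫ t in x..(x + c n), F t)
      - ((n:ℝ)+1) * (∫ t in (0:ℝ)..(0 + c n), F t)) atTop (𝓝 (F x - F 0)) :=
    (lipschitz_tendsto_avg hF x).sub (lipschitz_tendsto_avg hF 0)
  -- step 3 : DCT
  have step3 : Tendsto (fun n : ℕ => ∫ t in (0:ℝ)..x, φ n t) atTop
      (𝓝 (∫ t in (0:ℝ)..x, deriv F t)) := by
    simp only [intervalIntegral.integral_of_le hx]
    apply tendsto_integral_of_dominated_convergence (fun _ => (K:ℝ))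
    · intro n
      exact ((hcont.comp (by continuity)).sub hcont).mul continuous_const |>.aestronglyMeasurable
    · exact integrable_const _
    · intro n
      filter_upwards with t
      have : ‖F (t + c n) - F t‖ ≤ K * (c n) := by
        simpa [Real.dist_eq, abs_of_pos (hc0 n), add_sub_cancel_left] using hF.dist_le_mul (t + c n) t
      calc ‖φ n t‖ = ‖F (t + c n) - F t‖ * ((n:ℝ)+1) := by
            rw [hφdef]; simp [abs_mul, abs_of_nonneg (by positivity : (0:ℝ) ≤ (n:ℝ)+1)]
        _ ≤ (K * c n) * ((n:ℝ)+1) := by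
            apply mul_le_mul_of_nonneg_right this (by positivity)
        _ = K := by rw [hcdef]; field_simp
    · have hae : ∀ᵐ t ∂(volume.restrict (Ioc (0:ℝ) x)), DifferentiableAt ℝ F t :=
        ae_restrict_of_ae hF.ae_differentiableAt_real
      filter_upwards [hae] with t ht
      have hd : HasDerivAt F (deriv F t) t := ht.hasDerivAt
      rw [hasDerivAt_iff_tendsto_slope] at hd
      have hu : Tendsto (fun n : ℕ => t + c n) atTop (𝓝[≠] t) := by
        apply tendsto_nhdsWithin_of_tendsto_nhds_of_eventually_within
        · rw [show (𝓝 t) = 𝓝 (t + 0) by rw [add_zero]]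
          exact tendsto_const_nhds.add tendsto_one_div_add_atTop_nhds_zero_nat
        · filter_upwards with n
          simp only [mem_compl_iff, mem_singleton_iff]
          intro h
          nlinarith [hc0 n, h]
      have := hd.comp hu
      apply this.congr
      intro n
      simp only [Function.comp_apply, hφdef]
      rw [slope_def_field]
      simp only [add_sub_cancel_left]
      rw [show (c n) = 1/((n:ℝ)+1) from rfl]
      rw [div_div_eq_mul_div, div_one]
  exact tendsto_nhds_unique step3 (step2.congr fun n => (step1 n).symm)

lemma kernel_meas {r : ℝ} : Measurable (fun p : ℝ × ℝ => (p.1 - p.2) ^ r) := by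
  fun_prop

lemma inner_intOn {b : ℝ} (hb0 : 0 < b) {K : ℝ} {h : ℝ → ℝ}
    (hmeas : Measurable h) (hbound : ∀ s, |h s| ≤ K) {t : ℝ} (ht : 0 ≤ t) :
    IntegrableOn (fun s => (t - s) ^ (b - 1) * h s) (Ioc 0 t) volume := by
  have hker : IntervalIntegrable (fun s => (t - s) ^ (b - 1)) volume 0 t := by
    have := (intervalIntegral.intervalIntegrable_rpow' (a := 0) (b := t)
      (by linarith : (-1:ℝ) < b - 1)).comp_sub_left t
    simpa using this.symm
  have hker' : IntegrableOn (fun s => (t - s) ^ (b - 1)) (Ioc 0 t) volume := by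
    rw [← intervalIntegrable_iff_integrableOn_Ioc_of_le ht]
    exact hker
  have hK0 : 0 ≤ K := le_trans (abs_nonneg _) (hbound 0)
  refine Integrable.mono' (hker'.const_mul K) ?_ ?_
  · exact (show Measurable fun s => (t - s) ^ (b - 1) * h s by fun_prop).aestronglyMeasurable
  · filter_upwards [ae_restrict_mem measurableSet_Ioc] with s hs
    have h1 : 0 ≤ t - s := by linarith [hs.2]
    rw [Real.norm_eq_abs, abs_mul, abs_of_nonneg (Real.rpow_nonneg h1 _)]
    calc (t - s) ^ (b - 1) * |h s| ≤ (t - s) ^ (b - 1) * K :=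
          mul_le_mul_of_nonneg_left (hbound s) (Real.rpow_nonneg h1 _)
      _ = K * (t - s) ^ (b - 1) := mul_comm _ _

lemma kernel_int_eval {b : ℝ} (hb0 : 0 < b) {t : ℝ} (ht : 0 ≤ t) :
    (∫ s in (0:ℝ)..t, (t - s) ^ (b - 1)) = t ^ b / b := by
  rw [intervalIntegral.integral_comp_sub_left (fun u => u ^ (b - 1)) t]
  simp only [sub_self, sub_zero]
  rw [integral_rpow (Or.inl (by linarith))]
  rw [Real.zero_rpow (by linarith : b - 1 + 1 ≠ 0)]
  norm_num

lemma inner_bound {b : ℝ} (hb0 : 0 < b) {K : ℝ} {h : ℝ → ℝ}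
    (hmeas : Measurable h) (hbound : ∀ s, |h s| ≤ K) {t : ℝ} (ht : 0 ≤ t) (ht1 : t ≤ 1) :
    |∫ s in (0:ℝ)..t, (t - s) ^ (b - 1) * h s| ≤ K / b := by
  have hK0 : 0 ≤ K := le_trans (abs_nonneg _) (hbound 0)
  have step : |∫ s in (0:ℝ)..t, (t - s) ^ (b - 1) * h s| ≤ K * (t ^ b / b) := by
    have hker : IntervalIntegrable (fun s => (t - s) ^ (b - 1)) volume 0 t := by
      have := (intervalIntegral.intervalIntegrable_rpow' (a := 0) (b := t)
        (by linarith : (-1:ℝ) < b - 1)).comp_sub_left t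
      simpa using this.symm
    rw [← Real.norm_eq_abs]
    have := intervalIntegral.norm_integral_le_abs_of_norm_le
      (f := fun s => (t - s) ^ (b - 1) * h s)
      (g := fun s => K * (t - s) ^ (b - 1)) (μ := volume) (a := 0) (b := t) ?_ (hker.const_mul K)
    · calc ‖∫ s in (0:ℝ)..t, (t - s) ^ (b - 1) * h s‖
          ≤ |∫ s in (0:ℝ)..t, K * (t - s) ^ (b - 1)| := this
        _ = K * (t ^ b / b) := by
            rw [intervalIntegral.integral_const_mul, kernel_int_eval hb0 ht]
            exact abs_of_nonneg (by positivity)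
    · filter_upwards [ae_restrict_mem measurableSet_Ioc] with s hs
      rw [uIoc_of_le ht] at hs
      have h1 : 0 ≤ t - s := by linarith [hs.2]
      rw [Real.norm_eq_abs, abs_mul, abs_of_nonneg (Real.rpow_nonneg h1 _)]
      calc (t - s) ^ (b - 1) * |h s| ≤ (t - s) ^ (b - 1) * K :=
            mul_le_mul_of_nonneg_left (hbound s) (Real.rpow_nonneg h1 _)
        _ = K * (t - s) ^ (b - 1) := by ring
  calc |∫ s in (0:ℝ)..t, (t - s) ^ (b - 1) * h s| ≤ K * (t ^ b / b) := step
    _ ≤ K / b := by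
      rw [div_eq_mul_inv, div_eq_mul_inv]
      have h1 : t ^ b ≤ 1 := Real.rpow_le_one ht ht1 hb0.le
      calc K * (t ^ b * b⁻¹) ≤ K * (1 * b⁻¹) := by
            apply mul_le_mul_of_nonneg_left _ hK0
            apply mul_le_mul_of_nonneg_right h1 (by positivity)
        _ = K * b⁻¹ := by ring

lemma crux {a b : ℝ} (ha : 0 < a) (hb0 : 0 < b) (hab : a + b = 1)
    {K : ℝ} {h : ℝ → ℝ} (hmeas : Measurable h) (hbound : ∀ s, |h s| ≤ K)
    {x : ℝ} (hx0 : 0 ≤ x) (hx1 : x ≤ 1) :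
    (∫ t in (0:ℝ)..x, (x - t) ^ (a - 1) * ∫ s in (0:ℝ)..t, (t - s) ^ (b - 1) * h s)
      = Real.Gamma a * Real.Gamma b * ∫ s in (0:ℝ)..x, h s := by
  have hK0 : 0 ≤ K := le_trans (abs_nonneg _) (hbound 0)
  set μ := volume.restrict (Ioc (0:ℝ) x) with hμ
  set inn : ℝ → ℝ → ℝ := fun t s => (x - t) ^ (a - 1) * ((t - s) ^ (b - 1) * h s) with hinn
  set Φ : ℝ × ℝ → ℝ := fun p =>
    {q : ℝ × ℝ | q.2 ≤ q.1}.indicator (fun q => inn q.1 q.2) p with hΦ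
  have hΦmeas : Measurable Φ := by
    apply Measurable.indicator
    · simp only [hinn]; fun_prop
    · exact measurableSet_le measurable_snd measurable_fst
  -- slices in s
  have slice : ∀ t s : ℝ, Φ (t, s) = (Iic t).indicator (fun s => inn t s) s := by
    intro t s
    simp only [hΦ, indicator_apply, mem_setOf_eq, mem_Iic]
  -- slices in t
  have slicet : ∀ t s : ℝ, Φ (t, s) = (Ici s).indicator (fun t => inn t s) t := by
    intro t s
    simp only [hΦ, indicator_apply, mem_setOf_eq, mem_Ici]
  -- restricted measures
  have hres : ∀ t ∈ Ioc (0:ℝ) x, μ.restrict (Iic t) = volume.restrict (Ioc 0 t) := by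
    intro t ht
    rw [hμ, Measure.restrict_restrict measurableSet_Iic]
    congr 1
    ext s
    simp only [mem_inter_iff, mem_Iic, mem_Ioc]
    exact ⟨fun ⟨h1, h2, h3⟩ => ⟨h2, h1⟩, fun ⟨h1, h2⟩ => ⟨h2, h1, h2.trans ht.2⟩⟩
  have hresI : ∀ s ∈ Ioc (0:ℝ) x, μ.restrict (Ici s) = volume.restrict (Icc s x) := by
    intro s hs
    rw [hμ, Measure.restrict_restrict measurableSet_Ici]
    congr 1
    ext t
    simp only [mem_inter_iff, mem_Ici, mem_Ioc, mem_Icc]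
    exact ⟨fun ⟨h1, h2, h3⟩ => ⟨h1, h3⟩, fun ⟨h1, h2⟩ => ⟨h1, hs.1.trans_le h1, h2⟩⟩
  -- integrability of each s-slice
  have hslice : ∀ t ∈ Ioc (0:ℝ) x, Integrable (fun s => Φ (t, s)) μ := by
    intro t ht
    have : (fun s => Φ (t, s)) = (Iic t).indicator (fun s => inn t s) := funext fun s => slice t s
    rw [this, integrable_indicator_iff measurableSet_Iic, IntegrableOn, hres t ht]
    exact ((inner_intOn hb0 hmeas hbound ht.1.le).const_mul _)
  -- norm bound on slice integrals
  have hnormval : ∀ t ∈ Ioc (0:ℝ) x, (∫ s, ‖Φ (t, s)‖ ∂μ) ≤ (x - t) ^ (a - 1) * (K / b) := by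
    intro t ht
    have habs : ∀ s : ℝ, ‖Φ (t, s)‖
        = (Iic t).indicator (fun s => (x - t) ^ (a - 1) * ((t - s) ^ (b - 1) * |h s|)) s := by
      intro s
      rw [slice t s, norm_indicator_eq_indicator_norm]
      by_cases hs : s ≤ t
      · rw [indicator_of_mem (mem_Iic.2 hs), indicator_of_mem (mem_Iic.2 hs)]
        simp only [hinn, Real.norm_eq_abs, abs_mul]
        rw [abs_of_nonneg (Real.rpow_nonneg (by linarith [ht.2] : (0:ℝ) ≤ x - t) _),
          abs_of_nonneg (Real.rpow_nonneg (by linarith : (0:ℝ) ≤ t - s) _)]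
      · rw [indicator_of_notMem (by simpa using hs), indicator_of_notMem (by simpa using hs)]
    have e1 : (∫ s, ‖Φ (t, s)‖ ∂μ)
        = (x - t) ^ (a - 1) * ∫ s in (0:ℝ)..t, (t - s) ^ (b - 1) * |h s| := by
      rw [integral_congr_ae (Eventually.of_forall habs), integral_indicator measurableSet_Iic]
      rw [hres t ht, intervalIntegral.integral_of_le ht.1.le, MeasureTheory.integral_const_mul]
    rw [e1]
    apply mul_le_mul_of_nonneg_left _ (Real.rpow_nonneg (by linarith [ht.2]) _)
    have h3 := inner_bound hb0 hmeas.abs (fun s => by rw [abs_abs]; exact hbound s)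
      ht.1.le (ht.2.trans hx1)
    exact le_trans (le_abs_self _) h3
  -- product integrability
  have hInt : Integrable Φ (μ.prod μ) := by
    rw [MeasureTheory.integrable_prod_iff hΦmeas.aestronglyMeasurable]
    constructor
    · filter_upwards [ae_restrict_mem measurableSet_Ioc] with t ht
      exact hslice t ht
    · have hDint : Integrable (fun t => (x - t) ^ (a - 1) * (K / b)) μ := by
        apply Integrable.mul_const
        have := (intervalIntegral.intervalIntegrable_rpow' (a := 0) (b := x)
          (by linarith : (-1:ℝ) < a - 1)).comp_sub_left x
        have h2 : IntervalIntegrable (fun t => (x - t) ^ (a - 1)) volume 0 x := by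
          simpa using this.symm
        rw [hμ]
        exact (intervalIntegrable_iff_integrableOn_Ioc_of_le hx0).1 h2
      apply Integrable.mono' hDint
        (hΦmeas.norm.aestronglyMeasurable.integral_prod_right')
      filter_upwards [ae_restrict_mem measurableSet_Ioc] with t ht
      rw [Real.norm_eq_abs, abs_of_nonneg (integral_nonneg fun s => norm_nonneg _)]
      exact hnormval t ht
  -- LHS rewrite
  have hL : (∫ t in (0:ℝ)..x, (x - t) ^ (a - 1) * ∫ s in (0:ℝ)..t, (t - s) ^ (b - 1) * h s)
      = ∫ t, (∫ s, Φ (t, s) ∂μ) ∂μ := by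
    rw [intervalIntegral.integral_of_le hx0, ← hμ]
    refine (integral_congr_ae ?_).symm
    filter_upwards [ae_restrict_mem measurableSet_Ioc] with t ht
    have e1 : (∫ s, Φ (t, s) ∂μ) = ∫ s in Iic t, inn t s ∂μ := by
      rw [← integral_indicator measurableSet_Iic]
      exact integral_congr_ae (Eventually.of_forall fun s => slice t s)
    rw [e1, hres t ht, intervalIntegral.integral_of_le ht.1.le, hinn,
      MeasureTheory.integral_const_mul]
  -- swap
  have hswap : (∫ t, (∫ s, Φ (t, s) ∂μ) ∂μ) = ∫ s, (∫ t, Φ (t, s) ∂μ) ∂μ :=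
    integral_integral_swap hInt
  -- RHS rewrite
  have hR : (∫ s, (∫ t, Φ (t, s) ∂μ) ∂μ)
      = Real.Gamma a * Real.Gamma b * ∫ s in (0:ℝ)..x, h s := by
    rw [intervalIntegral.integral_of_le hx0, ← hμ, ← MeasureTheory.integral_const_mul]
    apply integral_congr_ae
    have hne : ∀ᵐ s ∂μ, s ≠ x := by
      refine ae_restrict_of_ae ?_
      have hset : {s : ℝ | ¬ s ≠ x} = {x} := by ext s; simp
      rw [ae_iff, hset]
      exact measure_singleton x
    filter_upwards [ae_restrict_mem measurableSet_Ioc, hne] with s hs hsne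
    have hsx : s < x := lt_of_le_of_ne hs.2 hsne
    have e1 : (∫ t, Φ (t, s) ∂μ) = ∫ t in Icc s x, inn t s ∂volume := by
      rw [show (∫ t, Φ (t, s) ∂μ) = ∫ t, (Ici s).indicator (fun t => inn t s) t ∂μ from
        integral_congr_ae (Eventually.of_forall fun t => slicet t s)]
      rw [integral_indicator measurableSet_Ici, hresI s hs]
    rw [e1, integral_Icc_eq_integral_Ioc, ← intervalIntegral.integral_of_le hsx.le]
    have e2 : ∀ t, inn t s = ((x - t) ^ (a - 1) * (t - s) ^ (b - 1)) * h s := fun t => by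
      rw [hinn]; ring
    rw [intervalIntegral.integral_congr (g := fun t => ((x - t) ^ (a - 1) * (t - s) ^ (b - 1)) * h s)
      (fun t _ => e2 t)]
    rw [intervalIntegral.integral_mul_const, beta_kernel ha hb0 hab hsx]
  rw [hL, hswap, hR]


end FBMAux

/-- Every Lipschitz function `f` on `[0,1]` with `f(0) = 0` lies in the Cameron–Martin space
of fractional Brownian motion with Hurst parameter `H ∈ (0,1/2)`, i.e. in the image of
`L²([0,1])` under the Riemann–Liouville fractional integral operator `I_{0+}^{H+1/2}`:
there is `g ∈ L²([0,1])` with `f(x) = (1/Γ(H+1/2)) ∫_0^x (x−t)^{H−1/2} g(t) dt` on `[0,1]`. -/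
theorem lipschitz_mem_cameronMartin (H : ℝ) (hH : H ∈ Ioo (0 : ℝ) (1 / 2))
    (f : ℝ → ℝ) (K : NNReal) (hf : LipschitzOnWith K f (Icc 0 1)) (hf0 : f 0 = 0) :
    ∃ g : ℝ → ℝ, MemLp g 2 (volume.restrict (Icc (0 : ℝ) 1)) ∧
      ∀ x ∈ Icc (0 : ℝ) 1,
        f x = (1 / Real.Gamma (H + 1 / 2)) * ∫ t in (0 : ℝ)..x, (x - t) ^ (H - 1 / 2) * g t := by
  obtain ⟨hH0, hH1⟩ := hH
  obtain ⟨F, hF, hFf⟩ := hf.extend_real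
  set a : ℝ := H + 1/2 with hadef
  set b : ℝ := 1/2 - H with hbdef
  have ha : 0 < a := by rw [hadef]; linarith
  have hb0 : 0 < b := by rw [hbdef]; linarith
  have hab : a + b = 1 := by rw [hadef, hbdef]; ring
  set h : ℝ → ℝ := deriv F with hhdef
  have hhmeas : Measurable h := measurable_deriv F
  have hhbound : ∀ t, |h t| ≤ (K:ℝ) := deriv_abs_le hF
  set g : ℝ → ℝ := fun t => (1 / Real.Gamma b) * ∫ s in (0:ℝ)..t, (t - s) ^ (b - 1) * h s
    with hgdef
  have hGb : 0 < Real.Gamma b := Real.Gamma_pos_of_pos hb0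
  have hGa : 0 < Real.Gamma a := Real.Gamma_pos_of_pos ha
  refine ⟨g, ?_, ?_⟩
  · -- Memℒp
    set Ψ : ℝ × ℝ → ℝ := fun q =>
      ({q : ℝ × ℝ | 0 < q.2 ∧ q.2 ≤ q.1}.indicator (fun q => (q.1 - q.2) ^ (b - 1) * h q.2)) q
      with hΨ
    have hmeasG : StronglyMeasurable (fun t => ∫ s, Ψ (t, s) ∂volume) := by
      apply StronglyMeasurable.integral_prod_right'
      apply Measurable.stronglyMeasurable
      apply Measurable.indicator
      · fun_prop
      · exact (measurableSet_lt measurable_const measurable_snd).inter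
          (measurableSet_le measurable_snd measurable_fst)
    have hkey : ∀ t : ℝ, 0 ≤ t → g t = (1 / Real.Gamma b) * ∫ s, Ψ (t, s) ∂volume := by
      intro t ht
      have e0 : ∀ s : ℝ, Ψ (t, s) = (Ioc (0:ℝ) t).indicator (fun s => (t - s) ^ (b - 1) * h s) s := by
        intro s
        simp only [hΨ, indicator_apply, mem_setOf_eq, mem_Ioc]
      show (1 / Real.Gamma b) * (∫ s in (0:ℝ)..t, (t - s) ^ (b - 1) * h s)
          = (1 / Real.Gamma b) * ∫ s, Ψ (t, s) ∂volume
      rw [integral_congr_ae (Eventually.of_forall e0), integral_indicator measurableSet_Ioc,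
        intervalIntegral.integral_of_le ht]
    have hgm : AEStronglyMeasurable g (volume.restrict (Icc (0:ℝ) 1)) := by
      apply AEStronglyMeasurable.congr
        (f := fun t => (1 / Real.Gamma b) * ∫ s, Ψ (t, s) ∂volume)
      · exact (hmeasG.aestronglyMeasurable.const_mul _)
      · rw [EventuallyEq, ae_restrict_iff' measurableSet_Icc]
        filter_upwards with t ht
        exact (hkey t ht.1).symm
    refine MemLp.of_bound hgm ((1 / Real.Gamma b) * ((K:ℝ) / b)) ?_
    rw [ae_restrict_iff' measurableSet_Icc]
    filter_upwards with t ht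
    rw [hgdef, Real.norm_eq_abs, abs_mul, abs_of_nonneg (by positivity : (0:ℝ) ≤ 1 / Real.Gamma b)]
    exact mul_le_mul_of_nonneg_left
      (inner_bound hb0 hhmeas hhbound ht.1 ht.2) (by positivity)
  · -- the identity
    intro x hx
    have e1 : ∀ t : ℝ, (x - t) ^ (H - 1/2) * g t
        = (1 / Real.Gamma b) * ((x - t) ^ (a - 1) * ∫ s in (0:ℝ)..t, (t - s) ^ (b - 1) * h s) := by
      intro t
      have : H - 1/2 = a - 1 := by rw [hadef]; ring
      rw [this, hgdef]; ring
    rw [intervalIntegral.integral_congr (fun t _ => e1 t), intervalIntegral.integral_const_mul,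
      crux ha hb0 hab hhmeas hhbound hx.1 hx.2]
    have hFTC : (∫ s in (0:ℝ)..x, h s) = f x := by
      rw [hhdef, lipschitz_ftc hF hx.1, ← hFf hx, ← hFf (left_mem_Icc.2 (by norm_num)), hf0,
        sub_zero]
    rw [hFTC]
    field_simp
end

section
/- Let E be a normed vector space, α ∈ (0,1], M ≥ 0, and let x : [0,1] → E be α-Hölder with constant M. Let D be a subdivision of [0,1] and let x^D be the piecewise-linear interpolation of x along D. Then x^D is α-Hölder with constant 3M, i.e. ‖x^D(t) − x^D(s)‖ ≤ 3M|t−s|^α for all s, t ∈ [0,1]. -/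
open Set

/-- If `x : [0,1] → E` is `α`-Hölder with constant `M` and `x^D` is its piecewise-linear
interpolation along a subdivision `D = (t_i)` of `[0,1]`, then `x^D` is `α`-Hölder with
constant `3M`. -/
theorem piecewiseLinear_holder {E : Type*} [NormedAddCommGroup E] [NormedSpace ℝ E]
    (α M : ℝ) (hα : α ∈ Ioc (0 : ℝ) 1) (hM : 0 ≤ M)
    (x : ℝ → E)
    (hx : ∀ s ∈ Icc (0 : ℝ) 1, ∀ t ∈ Icc (0 : ℝ) 1, ‖x t - x s‖ ≤ M * |t - s| ^ α)
    (N : ℕ) (hN : 0 < N) (tt : ℕ → ℝ) (ht0 : tt 0 = 0) (htN : tt N = 1)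
    (hmono : ∀ i < N, tt i < tt (i + 1))
    (xD : ℝ → E)
    (hxD : ∀ i < N, ∀ u ∈ Icc (tt i) (tt (i + 1)),
      xD u = x (tt i) + ((u - tt i) / (tt (i + 1) - tt i)) • (x (tt (i + 1)) - x (tt i))) :
    ∀ s ∈ Icc (0 : ℝ) 1, ∀ t ∈ Icc (0 : ℝ) 1, ‖xD t - xD s‖ ≤ 3 * M * |t - s| ^ α := by
  obtain ⟨hα0, hα1⟩ := hα
  -- monotonicity of the subdivision
  have hmono' : ∀ i j, i ≤ j → j ≤ N → tt i ≤ tt j := by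
    intro i j hij hjN
    induction j with
    | zero => interval_cases i; exact le_rfl
    | succ n ih =>
      rcases Nat.eq_or_lt_of_le hij with h | h
      · rw [h]
      · exact le_trans (ih (Nat.lt_succ_iff.mp h) (le_trans (Nat.le_succ n) hjN))
          (le_of_lt (hmono n (Nat.lt_of_succ_le hjN)))
  have hrange : ∀ i, i ≤ N → tt i ∈ Icc (0:ℝ) 1 := by
    intro i hi
    constructor
    · rw [← ht0]; exact hmono' 0 i (Nat.zero_le i) hi
    · rw [← htN]; exact hmono' i N hi le_rfl
  -- xD agrees with x at the nodes
  have hend : ∀ i, i < N → xD (tt i) = x (tt i) ∧ xD (tt (i+1)) = x (tt (i+1)) := by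
    intro i hi
    have hΔ : tt i < tt (i+1) := hmono i hi
    constructor
    · rw [hxD i hi (tt i) ⟨le_rfl, hΔ.le⟩]; simp
    · rw [hxD i hi (tt (i+1)) ⟨hΔ.le, le_rfl⟩, div_self (sub_ne_zero.mpr hΔ.ne'), one_smul]
      abel
  -- Hölder bound within one segment, with constant M
  have hseg : ∀ i, i < N → ∀ u ∈ Icc (tt i) (tt (i+1)), ∀ v ∈ Icc (tt i) (tt (i+1)),
      ‖xD v - xD u‖ ≤ M * |v - u| ^ α := by
    intro i hi u hu v hv
    have hΔ : (0:ℝ) < tt (i+1) - tt i := sub_pos.mpr (hmono i hi)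
    rw [hxD i hi u hu, hxD i hi v hv]
    have hcoef : (v - tt i) / (tt (i+1) - tt i) - (u - tt i) / (tt (i+1) - tt i)
        = (v - u) / (tt (i+1) - tt i) := by ring
    have heq : x (tt i) + ((v - tt i) / (tt (i+1) - tt i)) • (x (tt (i+1)) - x (tt i))
        - (x (tt i) + ((u - tt i) / (tt (i+1) - tt i)) • (x (tt (i+1)) - x (tt i)))
        = ((v - u) / (tt (i+1) - tt i)) • (x (tt (i+1)) - x (tt i)) := by
      rw [← hcoef, sub_smul]; abel
    rw [heq, norm_smul]
    have hw : ‖x (tt (i+1)) - x (tt i)‖ ≤ M * |tt (i+1) - tt i| ^ α :=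
      hx _ (hrange i hi.le) _ (hrange (i+1) hi)
    have habs : |v - u| ≤ tt (i+1) - tt i := by
      rw [abs_le]; constructor <;> linarith [hu.1, hu.2, hv.1, hv.2]
    set r : ℝ := |v - u| / (tt (i+1) - tt i) with hr
    have hc : ‖(v - u) / (tt (i+1) - tt i)‖ = r := by
      rw [Real.norm_eq_abs, abs_div, abs_of_pos hΔ]
    have hr0 : 0 ≤ r := div_nonneg (abs_nonneg _) hΔ.le
    have hr1 : r ≤ 1 := (div_le_one hΔ).mpr habs
    have hrα : r ≤ r ^ α := by
      rcases eq_or_lt_of_le hr0 with h | h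
      · rw [← h, Real.zero_rpow hα0.ne']
      · calc r = r ^ (1:ℝ) := (Real.rpow_one r).symm
          _ ≤ r ^ α := Real.rpow_le_rpow_of_exponent_ge h hr1 hα1
    have hvu : |v - u| = r * (tt (i+1) - tt i) := by
      rw [hr, div_mul_cancel₀ _ hΔ.ne']
    have hΔabs : |tt (i+1) - tt i| = tt (i+1) - tt i := abs_of_pos hΔ
    calc ‖(v - u) / (tt (i+1) - tt i)‖ * ‖x (tt (i+1)) - x (tt i)‖
        ≤ r * (M * (tt (i+1) - tt i) ^ α) := by
          rw [hc, ← hΔabs]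
          exact mul_le_mul_of_nonneg_left hw hr0
      _ ≤ r ^ α * (M * (tt (i+1) - tt i) ^ α) := by
          apply mul_le_mul_of_nonneg_right hrα
          exact mul_nonneg hM (Real.rpow_nonneg hΔ.le α)
      _ = M * |v - u| ^ α := by
          rw [hvu, Real.mul_rpow hr0 hΔ.le]; ring
  -- locating a point in a segment
  have hfind : ∀ s ∈ Icc (0:ℝ) 1, ∃ i < N, s ∈ Icc (tt i) (tt (i+1)) := by
    intro s hs
    have key : ∀ n, 0 < n → n ≤ N → s ≤ tt n → ∃ i < n, s ∈ Icc (tt i) (tt (i+1)) := by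
      intro n
      induction n with
      | zero => intro h; exact absurd h (lt_irrefl 0)
      | succ m ih =>
        intro _ hmN hsn
        by_cases hm : s ≤ tt m
        · rcases Nat.eq_zero_or_pos m with h0 | hpos
          · subst h0
            exact ⟨0, Nat.zero_lt_succ 0, ⟨by rw [ht0]; exact hs.1, hsn⟩⟩
          · obtain ⟨i, hi, hmem⟩ := ih hpos (le_trans (Nat.le_succ m) hmN) hm
            exact ⟨i, Nat.lt_succ_of_lt hi, hmem⟩
        · exact ⟨m, Nat.lt_succ_self m, ⟨le_of_not_ge hm, hsn⟩⟩
    exact key N hN le_rfl (by rw [htN]; exact hs.2)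
  -- main claim for s ≤ t
  have key : ∀ s ∈ Icc (0:ℝ) 1, ∀ t ∈ Icc (0:ℝ) 1, s ≤ t →
      ‖xD t - xD s‖ ≤ 3 * M * |t - s| ^ α := by
    intro s hs t ht hst
    obtain ⟨i, hi, hsi⟩ := hfind s hs
    obtain ⟨j, hj, htj⟩ := hfind t ht
    have hrpos : (0:ℝ) ≤ |t - s| ^ α := Real.rpow_nonneg (abs_nonneg _) α
    by_cases hcase : t ≤ tt (i+1)
    · have h1 := hseg i hi s hsi t ⟨le_trans hsi.1 hst, hcase⟩
      have h2 : M * |t - s| ^ α ≤ 3 * M * |t - s| ^ α := by nlinarith [mul_nonneg hM hrpos]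
      linarith
    · push_neg at hcase
      have hij : i < j := by
        by_contra h
        push_neg at h
        have : tt (j+1) ≤ tt (i+1) := hmono' (j+1) (i+1) (Nat.succ_le_succ h) hi
        linarith [htj.2]
      have h1j : tt (i+1) ≤ tt j := hmono' (i+1) j hij hj.le
      have e1 : xD (tt j) = x (tt j) := (hend j hj).1
      have e2 : xD (tt (i+1)) = x (tt (i+1)) := (hend i hi).2
      have b1 : ‖xD t - x (tt j)‖ ≤ M * |t - tt j| ^ α := by
        rw [← e1]; exact hseg j hj (tt j) ⟨le_rfl, (hmono j hj).le⟩ t htj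
      have b2 : ‖x (tt j) - x (tt (i+1))‖ ≤ M * |tt j - tt (i+1)| ^ α :=
        hx _ (hrange (i+1) hi) _ (hrange j hj.le)
      have b3 : ‖x (tt (i+1)) - xD s‖ ≤ M * |tt (i+1) - s| ^ α := by
        rw [← e2]
        rw [norm_sub_rev, abs_sub_comm]
        exact hseg i hi (tt (i+1)) ⟨(hmono i hi).le, le_rfl⟩ s hsi
      have hts : |t - s| = t - s := abs_of_nonneg (by linarith)
      have hs1 : s ≤ tt (i+1) := hsi.2
      have htj1 : tt j ≤ t := htj.1
      have mono1 : M * |t - tt j| ^ α ≤ M * |t - s| ^ α := by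
        apply mul_le_mul_of_nonneg_left _ hM
        apply Real.rpow_le_rpow (abs_nonneg _) _ hα0.le
        rw [hts, abs_of_nonneg (by linarith)]; linarith
      have mono2 : M * |tt j - tt (i+1)| ^ α ≤ M * |t - s| ^ α := by
        apply mul_le_mul_of_nonneg_left _ hM
        apply Real.rpow_le_rpow (abs_nonneg _) _ hα0.le
        rw [hts, abs_of_nonneg (by linarith)]; linarith
      have mono3 : M * |tt (i+1) - s| ^ α ≤ M * |t - s| ^ α := by
        apply mul_le_mul_of_nonneg_left _ hM
        apply Real.rpow_le_rpow (abs_nonneg _) _ hα0.le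
        rw [hts, abs_of_nonneg (by linarith)]; linarith
      have hdecomp : xD t - xD s
          = (xD t - x (tt j)) + (x (tt j) - x (tt (i+1))) + (x (tt (i+1)) - xD s) := by abel
      calc ‖xD t - xD s‖
          = ‖(xD t - x (tt j)) + (x (tt j) - x (tt (i+1))) + (x (tt (i+1)) - xD s)‖ := by
            rw [hdecomp]
        _ ≤ ‖xD t - x (tt j)‖ + ‖x (tt j) - x (tt (i+1))‖ + ‖x (tt (i+1)) - xD s‖ :=
            norm_add₃_le
        _ ≤ M * |t - s| ^ α + M * |t - s| ^ α + M * |t - s| ^ α := by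
            gcongr <;> [exact le_trans b1 mono1; exact le_trans b2 mono2;
              exact le_trans b3 mono3]
        _ = 3 * M * |t - s| ^ α := by ring
  intro s hs t ht
  rcases le_total s t with h | h
  · exact key s hs t ht h
  · rw [norm_sub_rev, abs_sub_comm]
    exact key t ht s hs h
end

section
/- Let E be a normed vector space, 0 < β < α ≤ 1, M ≥ 0, and let x : [0,1] → E be α-Hölder with constant M. Let D be a subdivision of [0,1] with mesh |D| and let x^D be the piecewise-linear interpolation of x along D. Then for all 0 ≤ s < t ≤ 1, ‖(x^D(t) − x(t)) − (x^D(s) − x(s))‖ ≤ 4M |t−s|^β |D|^{α−β}. In particular the β-Hölder distance between x and x^D is at most 4M|D|^{α−β}. -/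
open Set

/-- If `x : [0,1] → E` is `α`-Hölder with constant `M`, `0 < β < α ≤ 1`, and `x^D` is the
piecewise-linear interpolation of `x` along a subdivision `D` of `[0,1]` with mesh `|D|`, then
`‖(x^D(t) − x(t)) − (x^D(s) − x(s))‖ ≤ 4M |t−s|^β |D|^{α−β}` for all `0 ≤ s < t ≤ 1`. -/
theorem piecewiseLinear_holder_dist {E : Type*} [NormedAddCommGroup E] [NormedSpace ℝ E]
    (α β M : ℝ) (hβ : 0 < β) (hβα : β < α) (hα : α ≤ 1) (hM : 0 ≤ M)
    (x : ℝ → E)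
    (hx : ∀ s ∈ Icc (0 : ℝ) 1, ∀ t ∈ Icc (0 : ℝ) 1, ‖x t - x s‖ ≤ M * |t - s| ^ α)
    (N : ℕ) (hN : 0 < N) (tt : ℕ → ℝ) (ht0 : tt 0 = 0) (htN : tt N = 1)
    (hmono : ∀ i < N, tt i < tt (i + 1))
    (xD : ℝ → E)
    (hxD : ∀ i < N, ∀ u ∈ Icc (tt i) (tt (i + 1)),
      xD u = x (tt i) + ((u - tt i) / (tt (i + 1) - tt i)) • (x (tt (i + 1)) - x (tt i))) :
    ∀ s t : ℝ, 0 ≤ s → s < t → t ≤ 1 →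
      ‖(xD t - x t) - (xD s - x s)‖ ≤
        4 * M * |t - s| ^ β *
          ((Finset.range N).sup' (Finset.nonempty_range_iff.mpr hN.ne')
              fun i => tt (i + 1) - tt i) ^ (α - β) := by
  set D : ℝ := (Finset.range N).sup' (Finset.nonempty_range_iff.mpr hN.ne')
      fun i => tt (i + 1) - tt i with hDdef
  -- the mesh is positive
  have hDpos : 0 < D := by
    have h0 : (0 : ℕ) ∈ Finset.range N := Finset.mem_range.mpr hN
    have := Finset.le_sup' (fun i => tt (i + 1) - tt i) h0
    have h01 : tt 0 < tt 1 := hmono 0 hN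
    linarith [this]
  -- mesh bounds each step
  have hstep : ∀ i < N, tt (i + 1) - tt i ≤ D := fun i hi =>
    Finset.le_sup' (fun i => tt (i + 1) - tt i) (Finset.mem_range.mpr hi)
  -- monotonicity of tt up to N
  have hmono' : ∀ j ≤ N, ∀ i ≤ j, tt i ≤ tt j := by
    intro j hj
    induction j with
    | zero => intro i hi; interval_cases i; exact le_rfl
    | succ j ih =>
      intro i hi
      rcases Nat.lt_or_ge i (j + 1) with h | h
      · have h1 : tt i ≤ tt j := ih (by omega) i (by omega)
        have h2 : tt j < tt (j + 1) := hmono j (by omega)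
        linarith
      · have : i = j + 1 := by omega
        subst this; exact le_rfl
  have hnonneg : ∀ i ≤ N, 0 ≤ tt i := by
    intro i hi
    have := hmono' i hi 0 (Nat.zero_le _)
    rwa [ht0] at this
  have hle1 : ∀ i ≤ N, tt i ≤ 1 := by
    intro i hi
    have := hmono' N le_rfl i hi
    rwa [htN] at this
  -- every point of [0,1] lies in some segment
  have hfind : ∀ u : ℝ, 0 ≤ u → u ≤ 1 → ∃ i < N, tt i ≤ u ∧ u ≤ tt (i + 1) := by
    intro u hu0 hu1
    have key : ∀ n, n ≤ N → u ≤ tt n → ∃ i < N, tt i ≤ u ∧ u ≤ tt (i + 1) := by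
      intro n
      induction n with
      | zero =>
        intro _ hun
        rw [ht0] at hun
        have hu : u = 0 := le_antisymm hun hu0
        exact ⟨0, hN, by rw [ht0, hu], by rw [hu]; linarith [hmono 0 hN, ht0]⟩
      | succ n ih =>
        intro hn hun
        rcases le_or_gt u (tt n) with h | h
        · exact ih (by omega) h
        · exact ⟨n, by omega, h.le, hun⟩
    exact key N le_rfl (by rw [htN]; exact hu1)
  -- the interpolation agrees with x at the nodes
  have hnode : ∀ i ≤ N, xD (tt i) = x (tt i) := by
    intro i hi
    rcases Nat.lt_or_ge i N with h | h
    · have := hxD i h (tt i) ⟨le_rfl, (hmono i h).le⟩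
      rw [this]
      simp
    · have hiN : i = N := by omega
      rw [hiN]
      have hN1 : N - 1 < N := by omega
      have hNs : N - 1 + 1 = N := by omega
      have := hxD (N - 1) hN1 (tt N) (by rw [hNs]; exact ⟨(hmono (N - 1) hN1).le.trans (by rw [hNs]), le_rfl⟩)
      rw [hNs] at this
      rw [this]
      have hΔ : tt N - tt (N - 1) ≠ 0 := by
        have := hmono (N - 1) hN1; rw [hNs] at this; linarith
      rw [div_self hΔ, one_smul]
      abel
  -- key lemma: estimate within a single segment
  have keyA : ∀ i < N, ∀ u v : ℝ, tt i ≤ u → u ≤ v → v ≤ tt (i + 1) →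
      ‖(xD v - x v) - (xD u - x u)‖ ≤ 2 * M * (v - u) ^ β * D ^ (α - β) := by
    intro i hi u v hiu huv hvi
    rcases eq_or_lt_of_le huv with rfl | huv'
    · simp
      positivity
    set Δ : ℝ := tt (i + 1) - tt i with hΔdef
    have hΔpos : 0 < Δ := by have := hmono i hi; linarith
    have hΔD : Δ ≤ D := hstep i hi
    have hu01 : u ∈ Icc (0 : ℝ) 1 := ⟨(hnonneg i (by omega)).trans hiu,
      huv.trans (hvi.trans (hle1 (i + 1) (by omega)))⟩
    have hv01 : v ∈ Icc (0 : ℝ) 1 := ⟨(hnonneg i (by omega)).trans (hiu.trans huv),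
      hvi.trans (hle1 (i + 1) (by omega))⟩
    have hi01 : tt i ∈ Icc (0 : ℝ) 1 := ⟨hnonneg i (by omega), hle1 i (by omega)⟩
    have hi101 : tt (i + 1) ∈ Icc (0 : ℝ) 1 := ⟨hnonneg (i + 1) (by omega), hle1 (i + 1) (by omega)⟩
    have hxDu := hxD i hi u ⟨hiu, huv.trans hvi⟩
    have hxDv := hxD i hi v ⟨hiu.trans huv, hvi⟩
    have hdiff : xD v - xD u = ((v - u) / Δ) • (x (tt (i + 1)) - x (tt i)) := by
      rw [hxDu, hxDv]
      rw [add_sub_add_left_eq_sub, ← sub_smul, div_sub_div_same]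
      rw [hΔdef]
      ring_nf
    have hsplit : (xD v - x v) - (xD u - x u)
        = ((v - u) / Δ) • (x (tt (i + 1)) - x (tt i)) - (x v - x u) := by
      rw [← hdiff]; abel
    rw [hsplit]
    have hcoef : 0 ≤ (v - u) / Δ := div_nonneg (by linarith) hΔpos.le
    have hbound1 : ‖((v - u) / Δ) • (x (tt (i + 1)) - x (tt i))‖ ≤ (v - u) / Δ * (M * Δ ^ α) := by
      rw [norm_smul, Real.norm_eq_abs, abs_of_nonneg hcoef]
      have := hx (tt i) hi01 (tt (i + 1)) hi101
      rw [abs_of_pos hΔpos] at this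
      exact mul_le_mul_of_nonneg_left this hcoef
    have hbound2 : ‖x v - x u‖ ≤ M * (v - u) ^ α := by
      have := hx u hu01 v hv01
      rwa [abs_of_pos (by linarith : (0:ℝ) < v - u)] at this
    have htriangle := norm_sub_le (((v - u) / Δ) • (x (tt (i + 1)) - x (tt i))) (x v - x u)
    have hvu : 0 < v - u := by linarith
    have hvuΔ : v - u ≤ Δ := by simp only [hΔdef]; linarith
    -- (v-u)/Δ * Δ^α = (v-u) * Δ^(α-1)
    have hΔa : (v - u) / Δ * Δ ^ α = (v - u) * Δ ^ (α - 1) := by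
      rw [div_mul_eq_mul_div, mul_div_assoc, ← Real.rpow_sub_one hΔpos.ne']
    -- (v-u) * Δ^(α-1) ≤ (v-u)^β * Δ^(α-β)
    have hA : (v - u) * Δ ^ (α - 1) ≤ (v - u) ^ β * Δ ^ (α - β) := by
      have e3 : (v - u) ^ (1 - β) ≤ Δ ^ (1 - β) :=
        Real.rpow_le_rpow hvu.le hvuΔ (by linarith)
      have h4 : (0:ℝ) ≤ (v - u) ^ β := Real.rpow_nonneg hvu.le _
      have h5 : (0:ℝ) ≤ Δ ^ (α - 1) := Real.rpow_nonneg hΔpos.le _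
      calc (v - u) * Δ ^ (α - 1)
          = (v - u) ^ β * (v - u) ^ (1 - β) * Δ ^ (α - 1) := by
            rw [← Real.rpow_add hvu]; norm_num
        _ ≤ (v - u) ^ β * Δ ^ (1 - β) * Δ ^ (α - 1) := by
            apply mul_le_mul_of_nonneg_right _ h5
            exact mul_le_mul_of_nonneg_left e3 h4
        _ = (v - u) ^ β * Δ ^ (α - β) := by
            rw [mul_assoc, ← Real.rpow_add hΔpos]; congr 1; ring
    -- (v-u)^α ≤ (v-u)^β * Δ^(α-β)
    have hB : (v - u) ^ α ≤ (v - u) ^ β * Δ ^ (α - β) := by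
      have e1 : (v - u) ^ α = (v - u) ^ β * (v - u) ^ (α - β) := by
        rw [← Real.rpow_add hvu]; ring_nf
      rw [e1]
      exact mul_le_mul_of_nonneg_left
        (Real.rpow_le_rpow hvu.le hvuΔ (by linarith))
        (Real.rpow_nonneg hvu.le _)
    have hΔDpow : Δ ^ (α - β) ≤ D ^ (α - β) :=
      Real.rpow_le_rpow hΔpos.le hΔD (by linarith)
    have hvuβ : (0:ℝ) ≤ (v - u) ^ β := Real.rpow_nonneg hvu.le _
    calc ‖((v - u) / Δ) • (x (tt (i + 1)) - x (tt i)) - (x v - x u)‖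
        ≤ (v - u) / Δ * (M * Δ ^ α) + M * (v - u) ^ α := by
          exact htriangle.trans (add_le_add hbound1 hbound2)
      _ = M * ((v - u) / Δ * Δ ^ α) + M * (v - u) ^ α := by ring
      _ = M * ((v - u) * Δ ^ (α - 1)) + M * (v - u) ^ α := by rw [hΔa]
      _ ≤ M * ((v - u) ^ β * Δ ^ (α - β)) + M * ((v - u) ^ β * Δ ^ (α - β)) :=
          add_le_add (mul_le_mul_of_nonneg_left hA hM) (mul_le_mul_of_nonneg_left hB hM)
      _ = 2 * M * (v - u) ^ β * Δ ^ (α - β) := by ring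
      _ ≤ 2 * M * (v - u) ^ β * D ^ (α - β) := by
          apply mul_le_mul_of_nonneg_left hΔDpow
          positivity
  -- main argument
  intro s t hs hst ht
  obtain ⟨i, hiN, his, hsi⟩ := hfind s hs (by linarith)
  obtain ⟨j, hjN, hjt, htj⟩ := hfind t (by linarith) ht
  have habs : |t - s| = t - s := abs_of_pos (by linarith)
  have hDnn : (0:ℝ) ≤ D ^ (α - β) := Real.rpow_nonneg hDpos.le _
  have htsβ : (0:ℝ) ≤ (t - s) ^ β := Real.rpow_nonneg (by linarith) _
  rcases Nat.lt_or_ge i j with hij | hij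
  · -- different segments: use the nodes tt (i+1) ≤ tt j
    have hij1 : i + 1 ≤ j := hij
    have hnodes : tt (i + 1) ≤ tt j := hmono' j (by omega) (i + 1) hij1
    have h1 : xD (tt (i + 1)) = x (tt (i + 1)) := hnode (i + 1) (by omega)
    have h2 : xD (tt j) = x (tt j) := hnode j (by omega)
    have hsplit : (xD t - x t) - (xD s - x s)
        = ((xD t - x t) - (xD (tt j) - x (tt j)))
          + ((xD (tt (i + 1)) - x (tt (i + 1))) - (xD s - x s)) := by
      rw [h1, h2]; abel
    rw [hsplit]
    have e1 : ‖(xD t - x t) - (xD (tt j) - x (tt j))‖ ≤ 2 * M * (t - tt j) ^ β * D ^ (α - β) :=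
      keyA j hjN (tt j) t le_rfl hjt htj
    have e2 : ‖(xD (tt (i + 1)) - x (tt (i + 1))) - (xD s - x s)‖
        ≤ 2 * M * (tt (i + 1) - s) ^ β * D ^ (α - β) :=
      keyA i hiN s (tt (i + 1)) his hsi le_rfl
    have le1 : (t - tt j) ^ β ≤ (t - s) ^ β := by
      apply Real.rpow_le_rpow (by linarith) _ hβ.le
      have : s ≤ tt (i + 1) := hsi
      linarith
    have le2 : (tt (i + 1) - s) ^ β ≤ (t - s) ^ β := by
      apply Real.rpow_le_rpow (by linarith) _ hβ.le
      linarith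
    calc ‖((xD t - x t) - (xD (tt j) - x (tt j)))
          + ((xD (tt (i + 1)) - x (tt (i + 1))) - (xD s - x s))‖
        ≤ 2 * M * (t - tt j) ^ β * D ^ (α - β) + 2 * M * (tt (i + 1) - s) ^ β * D ^ (α - β) :=
          (norm_add_le _ _).trans (add_le_add e1 e2)
      _ ≤ 2 * M * (t - s) ^ β * D ^ (α - β) + 2 * M * (t - s) ^ β * D ^ (α - β) := by
          apply add_le_add <;>
          · apply mul_le_mul_of_nonneg_right _ hDnn
            apply mul_le_mul_of_nonneg_left _ (by linarith : (0:ℝ) ≤ 2 * M)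
            first | exact le1 | exact le2
      _ = 4 * M * (t - s) ^ β * D ^ (α - β) := by ring
      _ = 4 * M * |t - s| ^ β * D ^ (α - β) := by rw [habs]
  · -- same segment: i = j (since j ≤ i and s < t force it)
    have hji : tt j ≤ tt i := hmono' i (by omega) j hij
    -- s ≥ tt i ≥ tt j and t ≤ tt (j+1); also s ∈ [tt i, tt (i+1)]
    -- show t ≤ tt (i+1): if j < i then tt (j+1) ≤ tt i ≤ s < t ≤ tt (j+1), contradiction
    have hti1 : t ≤ tt (i + 1) := by
      rcases Nat.lt_or_ge j i with hji' | hji' 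
      · exfalso
        have : tt (j + 1) ≤ tt i := hmono' i (by omega) (j + 1) hji'
        linarith
      · have : i = j := by omega
        subst this
        exact htj
    have := keyA i hiN s t his hst.le hti1
    rw [habs]
    calc ‖(xD t - x t) - (xD s - x s)‖ ≤ 2 * M * (t - s) ^ β * D ^ (α - β) := this
      _ ≤ 4 * M * (t - s) ^ β * D ^ (α - β) := by nlinarith [htsβ, hDnn, mul_nonneg htsβ hDnn]
end
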